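/- arXiv:2005.02740 — 10 statements merged into one kernel-verified Lean document; each statement's English description precedes it below -/
import Mathlib

section
/- Let A be an n×n lower triangular integer matrix with all diagonal entries equal to -1. For a subset I of {1,...,n}, define L_I to be the n×n matrix whose j-th column is the standard basis vector e_j if j ∈ I, and the j-th column of A if j ∉ I. Then the matrix A_I := L_I^{-1} · L_{I^c} is again a lower triangular integer matrix with all diagonal entries equal to -1. -/
/-- The matrix `L_I` associated to an `n × n` integer matrix `A` and a subset
`I ⊆ {1,…,n}`: its `j`-th column is the standard basis vector `e_j` if `j ∈ I`,
and the `j`-th column of `A` otherwise. -/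
def Lmat {n : ℕ} (A : Matrix (Fin n) (Fin n) ℤ) (I : Finset (Fin n)) :
    Matrix (Fin n) (Fin n) ℤ :=
  Matrix.of fun i j => if j ∈ I then (if i = j then 1 else 0) else A i j

open Matrix OrderDual in
lemma Lmat_blockTriangular {n : ℕ} (A : Matrix (Fin n) (Fin n) ℤ)
    (hlt : ∀ i j : Fin n, i < j → A i j = 0) (I : Finset (Fin n)) :
    (Lmat A I).BlockTriangular (toDual : Fin n → (Fin n)ᵒᵈ) := by
  intro i j hij
  have h : i < j := hij
  simp only [Lmat, Matrix.of_apply]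
  split
  · rw [if_neg (Fin.ne_of_lt h)]
  · exact hlt i j h

open Matrix OrderDual in
lemma diag_mul_of_triangular {n : ℕ} (P Q : Matrix (Fin n) (Fin n) ℤ)
    (hP : P.BlockTriangular (toDual : Fin n → (Fin n)ᵒᵈ))
    (hQ : Q.BlockTriangular (toDual : Fin n → (Fin n)ᵒᵈ)) (i : Fin n) :
    (P * Q) i i = P i i * Q i i := by
  rw [Matrix.mul_apply]
  apply Finset.sum_eq_single
  · intro k _ hk
    rcases lt_or_gt_of_ne hk with h | h
    · rw [hQ (show toDual i < toDual k from h), mul_zero]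
    · rw [hP (show toDual k < toDual i from h), zero_mul]
  · intro h; exact absurd (Finset.mem_univ i) h

/-- If `A` is lower triangular with `-1`'s on the diagonal
(a Bott matrix), then for any subset `I` the matrix `A_I := L_I⁻¹ * L_{Iᶜ}`
is again lower triangular with `-1`'s on the diagonal. -/
theorem stmt0 {n : ℕ} (A : Matrix (Fin n) (Fin n) ℤ)
    (hlt : ∀ i j : Fin n, i < j → A i j = 0)
    (hdiag : ∀ i : Fin n, A i i = -1)
    (I : Finset (Fin n)) :
    (∀ i j : Fin n, i < j → ((Lmat A I)⁻¹ * Lmat A Iᶜ) i j = 0) ∧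
    (∀ i : Fin n, ((Lmat A I)⁻¹ * Lmat A Iᶜ) i i = -1) := by
  set L := Lmat A I with hLdef
  set M := Lmat A Iᶜ with hMdef
  have hL := Lmat_blockTriangular A hlt I
  have hM := Lmat_blockTriangular A hlt Iᶜ
  have hLdiag : ∀ i, L i i = if i ∈ I then 1 else -1 := by
    intro i
    simp only [hLdef, Lmat, Matrix.of_apply, if_pos rfl]
    split <;> simp [hdiag]
  have hMdiag : ∀ i, M i i = if i ∈ I then -1 else 1 := by
    intro i
    simp only [hMdef, Lmat, Matrix.of_apply, if_pos rfl, Finset.mem_compl]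
    split <;> simp_all [hdiag]
  have hdet : IsUnit L.det := by
    rw [Matrix.det_of_lowerTriangular L hL]
    apply IsUnit.of_mul_eq_one (∏ i, L.diag i)
    rw [← Finset.prod_mul_distrib]
    apply Finset.prod_eq_one
    intro i _
    rw [Matrix.diag_apply, hLdiag i]
    split <;> ring
  haveI : Invertible L := L.invertibleOfIsUnitDet hdet
  have hLinv : L⁻¹.BlockTriangular (OrderDual.toDual : Fin n → (Fin n)ᵒᵈ) :=
    Matrix.blockTriangular_inv_of_blockTriangular hL
  have hLinvdiag : ∀ i, L⁻¹ i i = L i i := by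
    intro i
    have h1 : (L * L⁻¹) i i = 1 := by
      rw [Matrix.mul_nonsing_inv L hdet]; simp
    rw [diag_mul_of_triangular L L⁻¹ hL hLinv] at h1
    have hLi := hLdiag i
    split at hLi
    · rw [hLi] at h1 ⊢; linarith
    · rw [hLi] at h1 ⊢; linarith
  constructor
  · intro i j hij
    exact (hLinv.mul hM) (show OrderDual.toDual j < OrderDual.toDual i from hij)
  · intro i
    rw [diag_mul_of_triangular _ _ hLinv hM, hLinvdiag i, hLdiag i, show Lmat A Iᶜ i i = M i i from rfl, hMdiag i]
    split <;> ring
end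

section
/- Let A be an n×n lower triangular integer matrix with -1's on the diagonal, and let I = {1,...,n} \ {k} for some k. Write a_{i,j} for the entries of A. Then the matrix A_I = L_I^{-1} L_{{k}} (with L as in the Bott matrix operation) has rows related to those of A+E (E the identity) as follows: the i-th row of A_I + E equals the i-th row of A+E for i < k; equals the negative of the k-th row of A+E for i = k; and equals (i-th row of A+E) + a_{i,k}·(k-th row of A+E) for i > k. -/
private lemma key_sum {n : ℕ} (k i : Fin n) (a : ℤ) (g : Fin n → ℤ) :
    ∑ m, (if m = k then a else if i = m then (1:ℤ) else 0) * g m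
      = a * g k + (if i = k then 0 else g i) := by
  by_cases h : i = k
  · subst h
    rw [Fintype.sum_eq_single i (fun m hm => by simp [hm, (Ne.symm hm)])]
    simp
  · rw [Fintype.sum_eq_add k i (Ne.symm h)
      (fun m hm => by simp [hm.1, Ne.symm hm.2])]
    simp [Ne.symm h, h]

/-- For a Bott matrix `A` (lower triangular, `-1` diagonal) and
`I = {1,…,n} \ {k}`, the rows of `A_I + E` (where `A_I = L_I⁻¹ · L_{{k}}` and `E`
is the identity) are: the rows of `A + E` for `i < k`; the negative of the `k`-th
row of `A + E` for `i = k`; and row `i` of `A+E` plus `a_{i,k}` times row `k` of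
`A+E` for `i > k`. -/
theorem stmt1 {n : ℕ} (A : Matrix (Fin n) (Fin n) ℤ)
    (hlt : ∀ i j : Fin n, i < j → A i j = 0)
    (hdiag : ∀ i : Fin n, A i i = -1)
    (k : Fin n) :
    (∀ i j : Fin n, i < k →
      ((Lmat A ({k}ᶜ))⁻¹ * Lmat A {k} + 1) i j = (A + 1) i j) ∧
    (∀ j : Fin n,
      ((Lmat A ({k}ᶜ))⁻¹ * Lmat A {k} + 1) k j = -((A + 1) k j)) ∧
    (∀ i j : Fin n, k < i →
      ((Lmat A ({k}ᶜ))⁻¹ * Lmat A {k} + 1) i j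
        = (A + 1) i j + A i k * ((A + 1) k j)) := by
  have hLentry : ∀ i m : Fin n, Lmat A ({k}ᶜ) i m
      = if m = k then A i k else if i = m then 1 else 0 := by
    intro i m
    simp only [Lmat, Matrix.of_apply, Finset.mem_compl, Finset.mem_singleton]
    by_cases h : m = k <;> simp [h]
  have hMentry : ∀ m j : Fin n, Lmat A {k} m j
      = if j = k then (if m = j then 1 else 0) else A m j := by
    intro m j
    simp only [Lmat, Matrix.of_apply, Finset.mem_singleton]
  have hLL : Lmat A ({k}ᶜ) * Lmat A ({k}ᶜ) = 1 := by
    ext i j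
    rw [Matrix.mul_apply, Matrix.one_apply]
    simp only [hLentry]
    rw [key_sum]
    rcases eq_or_ne j k with hj | hj
    · subst hj
      rcases eq_or_ne i j with hi | hi
      · subst hi; simp [hdiag]
      · simp only [if_pos rfl, hdiag, if_neg hi, if_true, ite_true]
        ring
    · rcases eq_or_ne i k with hi | hi
      · subst hi; simp [Ne.symm hj, hj]
      · simp [hi, Ne.symm hj, hj]
  have hinv : (Lmat A ({k}ᶜ))⁻¹ = Lmat A ({k}ᶜ) := Matrix.inv_eq_right_inv hLL
  have hT : ∀ i j : Fin n, (Lmat A ({k}ᶜ) * Lmat A {k}) i j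
      = A i k * Lmat A {k} k j + (if i = k then 0 else Lmat A {k} i j) := by
    intro i j
    rw [Matrix.mul_apply]
    simp only [hLentry]
    rw [key_sum]
  refine ⟨?_, ?_, ?_⟩
  · intro i j hik
    have hine : i ≠ k := ne_of_lt hik
    rw [Matrix.add_apply, Matrix.add_apply, hinv, hT]
    simp only [hMentry]
    rcases eq_or_ne j k with hj | hj
    · subst hj
      have h0 : A i j = 0 := hlt i j hik
      simp [hine, Ne.symm hine, h0, Matrix.one_apply]
    · simp [hine, hj, Ne.symm hj, hlt i k hik]
  · intro j
    rw [Matrix.add_apply, Matrix.add_apply, hinv, hT]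
    simp only [hMentry]
    rcases eq_or_ne j k with hj | hj
    · subst hj
      simp only [if_pos rfl, hdiag, Matrix.one_apply, if_neg, ite_true]
      simp [hdiag]
    · simp only [if_neg hj, if_pos rfl, Matrix.one_apply, if_neg (Ne.symm hj),
        hdiag]
      simp
  · intro i j hki
    have hine : i ≠ k := (ne_of_lt hki).symm
    rw [Matrix.add_apply, Matrix.add_apply, Matrix.add_apply, hinv, hT]
    simp only [hMentry]
    rcases eq_or_ne j k with hj | hj
    · subst hj
      simp [hine, Ne.symm hine, hdiag, Matrix.one_apply]
    · simp [hine, hj, Matrix.one_apply, Ne.symm hj]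
      ring
end

section
/- Let R = ℚ[x_1,...,x_n]/⟨x_i² − α_i x_i : i = 1,...,n⟩ where α_i = a_{i,1}x_1 + ... + a_{i,i-1}x_{i-1} for a lower triangular rational matrix (a_{i,j}). Set y_i := x_i − α_i/2 in R. Then the product y_1 · y_2 · ... · y_n is nonzero in R; in fact, y_1···y_n = x_1···x_n plus a linear combination of other degree-n square-free monomials in the x_i. -/
open MvPolynomial

/-- `α_i = Σ_{j<i} a_{i,j} x_j` as a polynomial. -/
noncomputable def bottAlphaQ {n : ℕ} (A : Matrix (Fin n) (Fin n) ℚ) (i : Fin n) :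
    MvPolynomial (Fin n) ℚ :=
  ∑ j ∈ Finset.univ.filter (fun j => j < i), C (A i j) * X j

/-- The defining ideal `⟨x_i² − α_i x_i : i = 1,…,n⟩` of the rational cohomology
ring of the Bott manifold determined by the lower triangular matrix `A`. -/
noncomputable def bottIdealQ {n : ℕ} (A : Matrix (Fin n) (Fin n) ℚ) :
    Ideal (MvPolynomial (Fin n) ℚ) :=
  Ideal.span (Set.range fun i : Fin n => X i ^ 2 - bottAlphaQ A i * X i)

/-- The class `x_i` in `R = ℚ[x_1,…,x_n]/⟨x_i² − α_i x_i⟩`. -/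
noncomputable def bxQ {n : ℕ} (A : Matrix (Fin n) (Fin n) ℚ) (i : Fin n) :
    MvPolynomial (Fin n) ℚ ⧸ bottIdealQ A :=
  Ideal.Quotient.mk _ (X i)

/-- The class `α_i` in `R`. -/
noncomputable def baQ {n : ℕ} (A : Matrix (Fin n) (Fin n) ℚ) (i : Fin n) :
    MvPolynomial (Fin n) ℚ ⧸ bottIdealQ A :=
  Ideal.Quotient.mk _ (bottAlphaQ A i)

/-- The class `y_i := x_i − α_i/2` in `R`. -/
noncomputable def byQ {n : ℕ} (A : Matrix (Fin n) (Fin n) ℚ) (i : Fin n) :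
    MvPolynomial (Fin n) ℚ ⧸ bottIdealQ A :=
  bxQ A i - (1 / 2 : ℚ) • baQ A i

lemma mk_smul' {n : ℕ} (A : Matrix (Fin n) (Fin n) ℚ) (a : ℚ)
    (p : MvPolynomial (Fin n) ℚ) :
    Ideal.Quotient.mk (bottIdealQ A) (a • p) = a • Ideal.Quotient.mk (bottIdealQ A) p := by
  rw [smul_eq_C_mul, map_mul, ← MvPolynomial.algebraMap_eq,
    Ideal.Quotient.mk_algebraMap, ← Algebra.smul_def]

lemma baQ_eq {n : ℕ} (A : Matrix (Fin n) (Fin n) ℚ) (i : Fin n) :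
    baQ A i = ∑ j ∈ Finset.univ.filter (fun j => j < i),
      algebraMap ℚ _ (A i j) * bxQ A j := by
  rw [baQ, bottAlphaQ, map_sum]
  refine Finset.sum_congr rfl fun j _ => ?_
  rw [map_mul, ← MvPolynomial.algebraMap_eq, Ideal.Quotient.mk_algebraMap]
  rfl

lemma bxQ_sq {n : ℕ} (A : Matrix (Fin n) (Fin n) ℚ) (i : Fin n) :
    bxQ A i ^ 2 = baQ A i * bxQ A i := by
  have h : (Ideal.Quotient.mk (bottIdealQ A)) (X i ^ 2 - bottAlphaQ A i * X i) = 0 := by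
    rw [Ideal.Quotient.eq_zero_iff_mem]
    exact Ideal.subset_span ⟨i, rfl⟩
  have := sub_eq_zero.mp (by simpa using h)
  simpa [bxQ, baQ] using this

lemma prod_mul_bxQ_eq_zero {n : ℕ} (A : Matrix (Fin n) (Fin n) ℚ) :
    ∀ (k : ℕ) (j : Fin n), j.val = k → ∀ s : Finset (Fin n), (∀ m : Fin n, m ≤ j → m ∈ s) →
      (∏ i ∈ s, bxQ A i) * bxQ A j = 0 := by
  intro k
  induction k using Nat.strong_induction_on with
  | _ k IH =>
    intro j hjk s hs
    have hj : j ∈ s := hs j le_rfl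
    have hprod : ∏ i ∈ s, bxQ A i = bxQ A j * ∏ i ∈ s.erase j, bxQ A i :=
      (Finset.mul_prod_erase s _ hj).symm
    have step : (∏ i ∈ s, bxQ A i) * bxQ A j = (∏ i ∈ s, bxQ A i) * baQ A j := by
      rw [hprod]; ring_nf
      rw [bxQ_sq]; ring
    rw [step, baQ_eq, Finset.mul_sum]
    refine Finset.sum_eq_zero fun m hm => ?_
    rw [Finset.mem_filter] at hm
    have hmj : m < j := hm.2
    rw [mul_comm (algebraMap ℚ _ (A j m)) (bxQ A m), ← mul_assoc,
      IH m.val (hjk ▸ hmj) m rfl s (fun m' hm' => hs m' (hm'.trans_lt hmj).le), zero_mul]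

lemma prod_by_eq_aux {n : ℕ} (A : Matrix (Fin n) (Fin n) ℚ) :
    ∀ k : ℕ, k ≤ n →
      ∏ i ∈ Finset.univ.filter (fun i : Fin n => i.val < k), byQ A i =
      ∏ i ∈ Finset.univ.filter (fun i : Fin n => i.val < k), bxQ A i := by
  intro k
  induction k with
  | zero => simp
  | succ k IH =>
    intro hk
    have hkn : k < n := hk
    set ik : Fin n := ⟨k, hkn⟩ with hik
    have hset : Finset.univ.filter (fun i : Fin n => i.val < k + 1) =
        insert ik (Finset.univ.filter (fun i : Fin n => i.val < k)) := by
      ext i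
      simp only [Finset.mem_filter, Finset.mem_insert, Finset.mem_univ, true_and]
      constructor
      · intro h
        rcases Nat.lt_succ_iff_lt_or_eq.mp h with h | h
        · exact Or.inr h
        · exact Or.inl (Fin.ext h)
      · rintro (rfl | h)
        · exact Nat.lt_succ_self k
        · exact h.trans (Nat.lt_succ_self k)
    have hnot : ik ∉ Finset.univ.filter (fun i : Fin n => i.val < k) := by
      simp [hik]
    rw [hset, Finset.prod_insert hnot, Finset.prod_insert hnot, IH (le_of_lt hk)]
    have hzero : baQ A ik * ∏ i ∈ Finset.univ.filter (fun i : Fin n => i.val < k), bxQ A i = 0 := by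
      rw [baQ_eq, Finset.sum_mul]
      refine Finset.sum_eq_zero fun m hm => ?_
      rw [Finset.mem_filter] at hm
      have hmk : m.val < k := hm.2
      rw [mul_assoc, mul_comm (bxQ A m),
        prod_mul_bxQ_eq_zero A m.val m rfl _ (fun m' hm' => by
          simp only [Finset.mem_filter, Finset.mem_univ, true_and]
          exact lt_of_le_of_lt hm' hmk), mul_zero]
    rw [byQ, sub_mul, smul_mul_assoc, hzero, smul_zero, sub_zero]

lemma prod_by_eq_prod_bx {n : ℕ} (A : Matrix (Fin n) (Fin n) ℚ) :
    (∏ i : Fin n, byQ A i) = ∏ i : Fin n, bxQ A i := by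
  have h := prod_by_eq_aux A n le_rfl
  have : Finset.univ.filter (fun i : Fin n => i.val < n) = Finset.univ := by
    simp [Finset.filter_true_of_mem, Fin.is_lt]
  rwa [this] at h

lemma prod_bx_ne_zero : ∀ (n : ℕ) (A : Matrix (Fin n) (Fin n) ℚ),
    (∏ i : Fin n, bxQ A i) ≠ 0 := by
  intro n
  induction n with
  | zero =>
    intro A h
    rw [Finset.univ_eq_empty, Finset.prod_empty] at h
    have h1 : (1 : MvPolynomial (Fin 0) ℚ) ∈ bottIdealQ A := by
      rw [← Ideal.Quotient.eq_zero_iff_mem, map_one]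
      exact h
    rw [bottIdealQ] at h1
    have hrange : (Set.range fun i : Fin 0 => X i ^ 2 - bottAlphaQ A i * X i) = ∅ := by
      simp
    rw [hrange, Ideal.span_empty, Ideal.mem_bot] at h1
    exact one_ne_zero h1
  | succ n IH =>
    intro A h
    set A' : Matrix (Fin n) (Fin n) ℚ := fun i j => A i.castSucc j.castSucc with hA'
    set r : MvPolynomial (Fin n) ℚ ⧸ bottIdealQ A' := ∏ k : Fin n, bxQ A' k with hr
    have hrne : r ≠ 0 := IH A'
    haveI : Nontrivial (MvPolynomial (Fin n) ℚ ⧸ bottIdealQ A') := nontrivial_of_ne r 0 hrne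
    set g : Fin (n + 1) → Polynomial (MvPolynomial (Fin n) ℚ ⧸ bottIdealQ A') :=
      Fin.lastCases Polynomial.X (fun k => Polynomial.C (bxQ A' k)) with hg
    set Φ : MvPolynomial (Fin (n + 1)) ℚ →ₐ[ℚ]
        Polynomial (MvPolynomial (Fin n) ℚ ⧸ bottIdealQ A') := MvPolynomial.aeval g with hPhi
    have hglast : g (Fin.last n) = Polynomial.X := Fin.lastCases_last
    have hgcast : ∀ k : Fin n, g k.castSucc = Polynomial.C (bxQ A' k) :=
      fun k => Fin.lastCases_castSucc k
    have hXlast : Φ (X (Fin.last n)) = Polynomial.X := by rw [hPhi, aeval_X, hglast]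
    have hXcast : ∀ k : Fin n, Φ (X k.castSucc) = Polynomial.C (bxQ A' k) := fun k => by
      rw [hPhi, aeval_X, hgcast]
    -- the filter sets
    have hfilter : ∀ k : Fin n,
        Finset.univ.filter (fun j : Fin (n+1) => j < k.castSucc) =
        (Finset.univ.filter (fun j : Fin n => j < k)).map Fin.castSuccEmb := by
      intro k
      ext j
      simp only [Finset.mem_filter, Finset.mem_univ, true_and, Finset.mem_map]
      constructor
      · intro hj
        have hjk : j.val < k.val := hj
        have hjn : j.val < n := lt_of_lt_of_le hjk (Nat.le_of_lt_succ k.castSucc.isLt)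
        exact ⟨⟨j.val, hjn⟩, hjk, by ext; simp [Fin.castSuccEmb]⟩
      · rintro ⟨m, hm, rfl⟩
        exact Fin.castSucc_lt_castSucc_iff.mpr hm
    have hlastfilter : Finset.univ.filter (fun j : Fin (n+1) => j < Fin.last n) =
        Finset.univ.map Fin.castSuccEmb := by
      ext j
      simp only [Finset.mem_filter, Finset.mem_univ, true_and, Finset.mem_map]
      constructor
      · intro hj
        have hjn : j.val < n := hj
        exact ⟨⟨j.val, hjn⟩, by ext; simp [Fin.castSuccEmb]⟩
      · rintro ⟨m, -, rfl⟩
        exact Fin.castSucc_lt_last m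
    have halpha : ∀ k : Fin n,
        Φ (bottAlphaQ A k.castSucc) = Polynomial.C (baQ A' k) := by
      intro k
      rw [bottAlphaQ, map_sum, hfilter k, Finset.sum_map, baQ_eq, map_sum]
      refine Finset.sum_congr rfl fun m hm => ?_
      have hemb : (Fin.castSuccEmb m : Fin (n+1)) = m.castSucc := rfl
      rw [hemb, map_mul, hPhi, aeval_X, hgcast, aeval_C, Polynomial.algebraMap_apply,
        ← Polynomial.C_mul]
    have hgen0 : ∀ k : Fin n,
        Φ (X k.castSucc ^ 2 - bottAlphaQ A k.castSucc * X k.castSucc) = 0 := by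
      intro k
      rw [map_sub, map_pow, map_mul, hXcast, halpha, ← Polynomial.C_pow,
        ← Polynomial.C_mul, ← map_sub, bxQ_sq, sub_self, map_zero]
    set a : MvPolynomial (Fin n) ℚ ⧸ bottIdealQ A' :=
      ∑ m : Fin n, algebraMap ℚ _ (A (Fin.last n) m.castSucc) * bxQ A' m with ha
    have halast : Φ (bottAlphaQ A (Fin.last n)) = Polynomial.C a := by
      rw [bottAlphaQ, map_sum, hlastfilter, Finset.sum_map, ha, map_sum]
      refine Finset.sum_congr rfl fun m _ => ?_
      have hemb : (Fin.castSuccEmb m : Fin (n+1)) = m.castSucc := rfl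
      rw [hemb, map_mul, hPhi, aeval_X, hgcast, aeval_C, Polynomial.algebraMap_apply,
        ← Polynomial.C_mul]
    set f : Polynomial (MvPolynomial (Fin n) ℚ ⧸ bottIdealQ A') :=
      Polynomial.X ^ 2 - Polynomial.C a * Polynomial.X with hf
    have hdegC : ∀ b : MvPolynomial (Fin n) ℚ ⧸ bottIdealQ A',
        (Polynomial.C b * Polynomial.X).degree ≤ 1 := by
      intro b
      calc (Polynomial.C b * Polynomial.X).degree
          ≤ (Polynomial.C b).degree + (Polynomial.X : Polynomial _).degree :=
            Polynomial.degree_mul_le _ _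
        _ ≤ 0 + 1 := add_le_add Polynomial.degree_C_le (le_of_eq Polynomial.degree_X)
        _ = 1 := zero_add 1
    have hdeglt : (Polynomial.C a * Polynomial.X).degree <
        ((Polynomial.X : Polynomial (MvPolynomial (Fin n) ℚ ⧸ bottIdealQ A')) ^ 2).degree := by
      rw [Polynomial.degree_X_pow]
      exact lt_of_le_of_lt (hdegC a) (by norm_num)
    have hfmonic : f.Monic := Polynomial.monic_X_pow_sub
      (lt_of_le_of_lt (hdegC a) (by norm_num))
    have hfdeg : f.degree = 2 := by
      rw [hf, Polynomial.degree_sub_eq_left_of_degree_lt hdeglt, Polynomial.degree_X_pow]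
      rfl
    have hgenlast : Φ (X (Fin.last n) ^ 2 - bottAlphaQ A (Fin.last n) * X (Fin.last n)) = f := by
      rw [map_sub, map_pow, map_mul, hXlast, halast, hf]
    -- membership
    have hmem : (∏ i : Fin (n+1), (X i : MvPolynomial (Fin (n+1)) ℚ)) ∈ bottIdealQ A := by
      rw [← Ideal.Quotient.eq_zero_iff_mem, map_prod]
      exact h
    have hmap : Φ (∏ i : Fin (n+1), (X i : MvPolynomial (Fin (n+1)) ℚ)) ∈
        Ideal.span {f} := by
      have h1 : Φ (∏ i : Fin (n+1), (X i : MvPolynomial (Fin (n+1)) ℚ)) ∈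
          Ideal.map Φ (bottIdealQ A) := Ideal.mem_map_of_mem Φ hmem
      rw [show bottIdealQ A = Ideal.span (Set.range fun i : Fin (n+1) => X i ^ 2 - bottAlphaQ A i * X i) from rfl] at h1
      rw [Ideal.map_span] at h1
      refine Ideal.span_le.mpr ?_ h1
      rintro - ⟨-, ⟨i, rfl⟩, rfl⟩
      dsimp only
      induction i using Fin.lastCases with
      | last => exact Set.mem_of_eq_of_mem hgenlast (Ideal.subset_span rfl)
      | cast k => exact Set.mem_of_eq_of_mem (hgen0 k) (Ideal.zero_mem _)
    have hprodX : Φ (∏ i : Fin (n+1), (X i : MvPolynomial (Fin (n+1)) ℚ)) =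
        Polynomial.C r * Polynomial.X := by
      rw [map_prod, Fin.prod_univ_castSucc, hXlast,
        Finset.prod_congr rfl (fun k _ => hXcast k), ← map_prod, ← hr]
    rw [hprodX] at hmap
    have hdvd : f ∣ Polynomial.C r * Polynomial.X := (Ideal.mem_span_singleton (x := Polynomial.C r * Polynomial.X) (y := f)).mp hmap
    have hmod : (Polynomial.C r * Polynomial.X) %ₘ f = 0 :=
      (Polynomial.modByMonic_eq_zero_iff_dvd hfmonic).mpr hdvd
    have hself : (Polynomial.C r * Polynomial.X) %ₘ f = Polynomial.C r * Polynomial.X := by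
      rw [Polynomial.modByMonic_eq_self_iff hfmonic, hfdeg]
      exact lt_of_le_of_lt (hdegC r) (by norm_num)
    rw [hself] at hmod
    have hr0 : r = 0 := by
      have hc := congrArg (fun p => Polynomial.coeff p 1) hmod
      simpa using hc
    exact hrne hr0

/-- In `R = ℚ[x_1,…,x_n]/⟨x_i² − α_i x_i⟩` with
`y_i = x_i − α_i/2`, the product `y_1 ⋯ y_n` is nonzero; in fact it equals
`x_1 ⋯ x_n` (the unique square-free monomial with `n` factors). -/
theorem stmt3 {n : ℕ} (A : Matrix (Fin n) (Fin n) ℚ)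
    (hlt : ∀ i j : Fin n, i < j → A i j = 0) :
    (∏ i : Fin n, byQ A i) ≠ 0 ∧
    (∏ i : Fin n, byQ A i) = ∏ i : Fin n, bxQ A i := by
  refine ⟨?_, prod_by_eq_prod_bx A⟩
  rw [prod_by_eq_prod_bx A]
  exact prod_bx_ne_zero n A
end

section
/- Let R = ℤ[x_1,...,x_n]/⟨x_i² − α_i x_i : i=1,...,n⟩ where α_i = Σ_{j<i} a_{i,j} x_j with a_{i,j} ∈ ℤ. Then the set of square-free monomials {x_{i_1}···x_{i_k} : 1 ≤ i_1 < ... < i_k ≤ n} is a ℤ-basis of the degree-2k graded component of R (where each x_i has degree 2). In particular, R is a free ℤ-module of rank 2^n. -/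
open MvPolynomial

/-- `α_i = Σ_{j<i} a_{i,j} x_j` as a polynomial. -/
noncomputable def bottAlpha {n : ℕ} (A : Matrix (Fin n) (Fin n) ℤ) (i : Fin n) :
    MvPolynomial (Fin n) ℤ :=
  ∑ j ∈ Finset.univ.filter (fun j => j < i), C (A i j) * X j

/-- The defining ideal `⟨x_i² − α_i x_i : i = 1,…,n⟩` of the integral cohomology
ring of the Bott manifold determined by the Bott matrix `A`. -/
noncomputable def bottIdeal {n : ℕ} (A : Matrix (Fin n) (Fin n) ℤ) :
    Ideal (MvPolynomial (Fin n) ℤ) :=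
  Ideal.span (Set.range fun i : Fin n => X i ^ 2 - bottAlpha A i * X i)

/-- The class `x_i` in `R = ℤ[x_1,…,x_n]/⟨x_i² − α_i x_i⟩`. -/
noncomputable def bx {n : ℕ} (A : Matrix (Fin n) (Fin n) ℤ) (i : Fin n) :
    MvPolynomial (Fin n) ℤ ⧸ bottIdeal A :=
  Ideal.Quotient.mk _ (X i)

namespace BottAux

variable {n : ℕ}

/-- measure -/
def mu (e : Fin n →₀ ℕ) : ℕ := ∑ i : Fin n, e i * 2 ^ (i : ℕ)

lemma mu_add (e f : Fin n →₀ ℕ) : mu (e + f) = mu e + mu f := by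
  simp [mu, add_mul, Finset.sum_add_distrib]

lemma mu_single (i : Fin n) (m : ℕ) : mu (Finsupp.single i m) = m * 2 ^ (i : ℕ) := by
  simp [mu, Finsupp.single_apply, Finset.sum_ite_eq' Finset.univ i (fun k => m * 2 ^ (k : ℕ))]

lemma sub_single_add (e : Fin n →₀ ℕ) (i : Fin n) (hi : 1 ≤ e i) :
    e - Finsupp.single i 1 + Finsupp.single i 1 = e := by
  ext k
  simp only [Finsupp.add_apply, Finsupp.tsub_apply, Finsupp.single_apply]
  rcases eq_or_ne i k with rfl | h
  · simp; omega
  · simp [h]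

lemma mu_shift_lt (e : Fin n →₀ ℕ) {i j : Fin n} (hj : j < i) (hi : 1 ≤ e i) :
    mu (e - Finsupp.single i 1 + Finsupp.single j 1) < mu e := by
  have h1 : e = (e - Finsupp.single i 1) + Finsupp.single i 1 := (sub_single_add e i hi).symm
  calc mu (e - Finsupp.single i 1 + Finsupp.single j 1)
      = mu (e - Finsupp.single i 1) + 2 ^ (j : ℕ) := by rw [mu_add, mu_single, one_mul]
    _ < mu (e - Finsupp.single i 1) + 2 ^ (i : ℕ) := by
        have : (2:ℕ) ^ (j:ℕ) < 2 ^ (i:ℕ) := Nat.pow_lt_pow_right one_lt_two hj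
        omega
    _ = mu e := by conv_rhs => rw [h1]; rw [mu_add, mu_single, one_mul]

/-- normal form on exponent vectors -/
noncomputable def nf (A : Matrix (Fin n) (Fin n) ℤ) (e : Fin n →₀ ℕ) : Finset (Fin n) →₀ ℤ :=
  if h : ∃ i, 2 ≤ e i then
    ∑ j : Fin n,
      if hji : j < Classical.choose h then
        A (Classical.choose h) j •
          nf A (e - Finsupp.single (Classical.choose h) 1 + Finsupp.single j 1)
      else 0
  else Finsupp.single e.support 1
termination_by mu e
decreasing_by
  exact mu_shift_lt e hji (le_trans one_le_two (Classical.choose_spec h))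

end BottAux

namespace BottAux
variable {n : ℕ} (A : Matrix (Fin n) (Fin n) ℤ)

lemma shift_apply_ne (e : Fin n →₀ ℕ) {t : Fin n} (s i : Fin n) (h : t ≠ i) :
    (e - Finsupp.single t 1 + Finsupp.single s 1 : Fin n →₀ ℕ) i
      = e i + (if s = i then 1 else 0) := by
  simp only [Finsupp.add_apply, Finsupp.tsub_apply, Finsupp.single_apply, if_neg h]
  split_ifs <;> omega

lemma shift_comm (e : Fin n →₀ ℕ) {i t : Fin n} (s j : Fin n) (hit : i ≠ t)
    (hei : 1 ≤ e i) (het : 1 ≤ e t) :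
    e - Finsupp.single t 1 + Finsupp.single s 1 - Finsupp.single i 1 + Finsupp.single j 1 =
      e - Finsupp.single i 1 + Finsupp.single j 1 - Finsupp.single t 1 + Finsupp.single s 1 := by
  ext k
  simp only [Finsupp.add_apply, Finsupp.tsub_apply, Finsupp.single_apply]
  split_ifs <;> subst_vars <;> first | exact absurd rfl hit | omega

lemma nf_of_squarefree (e : Fin n →₀ ℕ) (h : ¬ ∃ i, 2 ≤ e i) :
    nf A e = Finsupp.single e.support 1 := by
  rw [nf, dif_neg h]

lemma nf_red : ∀ (e : Fin n →₀ ℕ) (i : Fin n), 2 ≤ e i →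
    nf A e = ∑ j ∈ Finset.univ.filter (fun j => j < i),
      A i j • nf A (e - Finsupp.single i 1 + Finsupp.single j 1) := by
  suffices H : ∀ (m : ℕ) (e : Fin n →₀ ℕ) (i : Fin n), mu e = m → 2 ≤ e i →
      nf A e = ∑ j ∈ Finset.univ.filter (fun j => j < i),
        A i j • nf A (e - Finsupp.single i 1 + Finsupp.single j 1) from
    fun e i hi => H (mu e) e i rfl hi
  intro m
  induction m using Nat.strong_induction_on with
  | _ m IH =>
    rintro e i rfl hi
    have hex : ∃ t, 2 ≤ e t := ⟨i, hi⟩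
    have h2t : 2 ≤ e (Classical.choose hex) := Classical.choose_spec hex
    rw [nf, dif_pos hex]
    simp only [dite_eq_ite, ← Finset.sum_filter]
    set t := Classical.choose hex with ht
    rcases eq_or_ne t i with rfl | hne
    · rfl
    · have h1i : 1 ≤ e i := le_trans one_le_two hi
      have h1t : 1 ≤ e t := le_trans one_le_two h2t
      have L : ∀ s ∈ Finset.univ.filter (fun j => j < t),
          nf A (e - Finsupp.single t 1 + Finsupp.single s 1) =
            ∑ j ∈ Finset.univ.filter (fun j => j < i), A i j •
              nf A (e - Finsupp.single t 1 + Finsupp.single s 1 - Finsupp.single i 1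
                + Finsupp.single j 1) := by
        intro s hs
        simp only [Finset.mem_filter] at hs
        refine IH _ (mu_shift_lt e hs.2 h1t) _ i rfl ?_
        rw [shift_apply_ne e s i hne]
        omega
      have R : ∀ j ∈ Finset.univ.filter (fun j => j < i),
          nf A (e - Finsupp.single i 1 + Finsupp.single j 1) =
            ∑ s ∈ Finset.univ.filter (fun j => j < t), A t s •
              nf A (e - Finsupp.single i 1 + Finsupp.single j 1 - Finsupp.single t 1
                + Finsupp.single s 1) := by
        intro j hj
        simp only [Finset.mem_filter] at hj
        refine IH _ (mu_shift_lt e hj.2 h1i) _ t rfl ?_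
        rw [shift_apply_ne e j t (Ne.symm hne)]
        omega
      have E1 : ∀ s ∈ Finset.univ.filter (fun j => j < t),
          A t s • nf A (e - Finsupp.single t 1 + Finsupp.single s 1)
            = ∑ j ∈ Finset.univ.filter (fun j => j < i),
                (A i j * A t s) • nf A (e - Finsupp.single t 1 + Finsupp.single s 1
                  - Finsupp.single i 1 + Finsupp.single j 1) := by
        intro s hs; rw [L s hs, Finset.smul_sum]
        exact Finset.sum_congr rfl fun j _ => by rw [smul_smul, mul_comm]
      have E2 : ∀ j ∈ Finset.univ.filter (fun j => j < i),
          A i j • nf A (e - Finsupp.single i 1 + Finsupp.single j 1)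
            = ∑ s ∈ Finset.univ.filter (fun j => j < t),
                (A i j * A t s) • nf A (e - Finsupp.single t 1 + Finsupp.single s 1
                  - Finsupp.single i 1 + Finsupp.single j 1) := by
        intro j hj; rw [R j hj, Finset.smul_sum]
        exact Finset.sum_congr rfl fun s _ => by
          rw [smul_smul, shift_comm e s j (Ne.symm hne) h1i h1t]
      rw [Finset.sum_congr rfl E1, Finset.sum_congr rfl E2, Finset.sum_comm]

lemma single_two_eq (f : Fin n →₀ ℕ) (i j : Fin n) :
    f + Finsupp.single i 2 - Finsupp.single i 1 + Finsupp.single j 1 =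
      f + Finsupp.single i 1 + Finsupp.single j 1 := by
  ext k
  simp only [Finsupp.add_apply, Finsupp.tsub_apply, Finsupp.single_apply]
  split_ifs <;> omega

lemma nf_add_two (f : Fin n →₀ ℕ) (i : Fin n) :
    nf A (f + Finsupp.single i 2) = ∑ j ∈ Finset.univ.filter (fun j => j < i),
      A i j • nf A (f + Finsupp.single i 1 + Finsupp.single j 1) := by
  rw [nf_red A (f + Finsupp.single i 2) i (by simp)]
  exact Finset.sum_congr rfl fun j _ => by rw [single_two_eq]

end BottAux

namespace BottAux
variable {n : ℕ} (A : Matrix (Fin n) (Fin n) ℤ)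

/-- the normal-form linear map -/
noncomputable def phi : MvPolynomial (Fin n) ℤ →ₗ[ℤ] (Finset (Fin n) →₀ ℤ) :=
  (MvPolynomial.basisMonomials (Fin n) ℤ).constr ℤ (nf A)

lemma phi_monomial (e : Fin n →₀ ℕ) (c : ℤ) :
    phi A (monomial e c) = c • nf A e := by
  have h1 : (monomial e c : MvPolynomial (Fin n) ℤ) = c • monomial e 1 := by
    rw [MvPolynomial.smul_monomial, smul_eq_mul, mul_one]
  rw [h1, map_smul]
  congr 1
  have h2 : (monomial e 1 : MvPolynomial (Fin n) ℤ)
      = MvPolynomial.basisMonomials (Fin n) ℤ e := by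
    rw [MvPolynomial.coe_basisMonomials]
  rw [h2, phi, Module.Basis.constr_basis]

lemma expand_sq (f : Fin n →₀ ℕ) (i : Fin n) :
    (monomial f 1 : MvPolynomial (Fin n) ℤ) * X i ^ 2 = monomial (f + Finsupp.single i 2) 1 := by
  rw [X_pow_eq_monomial, monomial_mul, mul_one]

lemma expand_alpha (f : Fin n →₀ ℕ) (i : Fin n) :
    (monomial f 1 : MvPolynomial (Fin n) ℤ) * (bottAlpha A i * X i)
      = ∑ j ∈ Finset.univ.filter (fun j => j < i),
          A i j • monomial (f + Finsupp.single i 1 + Finsupp.single j 1) 1 := by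
  rw [bottAlpha, Finset.sum_mul, Finset.mul_sum]
  refine Finset.sum_congr rfl fun j _ => ?_
  rw [C_mul_X_eq_monomial,
    show (X i : MvPolynomial (Fin n) ℤ) = monomial (Finsupp.single i 1) 1 from rfl,
    monomial_mul, monomial_mul, one_mul, mul_one, MvPolynomial.smul_monomial, smul_eq_mul, mul_one]
  congr 1
  abel

lemma phi_monomial_mul_gen (e : Fin n →₀ ℕ) (i : Fin n) :
    phi A (monomial e 1 * (X i ^ 2 - bottAlpha A i * X i)) = 0 := by
  rw [mul_sub, map_sub, expand_sq, expand_alpha, map_sum, phi_monomial, one_smul, nf_add_two]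
  rw [sub_eq_zero]
  exact Finset.sum_congr rfl fun j _ => by rw [map_smul, phi_monomial, one_smul]

lemma phi_mul_gen (q : MvPolynomial (Fin n) ℤ) (i : Fin n) :
    phi A (q * (X i ^ 2 - bottAlpha A i * X i)) = 0 := by
  induction q using MvPolynomial.induction_on' with
  | monomial u a =>
    have h1 : (monomial u a : MvPolynomial (Fin n) ℤ) = a • monomial u 1 := by
      rw [MvPolynomial.smul_monomial, smul_eq_mul, mul_one]
    rw [h1, smul_mul_assoc, map_smul, phi_monomial_mul_gen, smul_zero]
  | add p q hp hq => rw [add_mul, map_add, hp, hq, add_zero]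

lemma phi_ideal {p : MvPolynomial (Fin n) ℤ} (hp : p ∈ bottIdeal A) : phi A p = 0 := by
  have H : ∀ x ∈ bottIdeal A, ∀ q : MvPolynomial (Fin n) ℤ, phi A (q * x) = 0 := by
    intro x hx
    refine Submodule.span_induction ?_ ?_ ?_ ?_ hx
    · rintro y ⟨i, rfl⟩ q
      exact phi_mul_gen A q i
    · intro q; rw [mul_zero, map_zero]
    · intro y z _ _ hy hz q
      rw [mul_add, map_add, hy q, hz q, add_zero]
    · intro a y _ hy q
      rw [smul_eq_mul, ← mul_assoc]
      exact hy (q * a)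
  simpa using H p hp 1

/-- exponent vector of a squarefree monomial -/
noncomputable def eS (S : Finset (Fin n)) : Fin n →₀ ℕ := ∑ i ∈ S, Finsupp.single i 1

lemma eS_apply (S : Finset (Fin n)) (k : Fin n) :
    eS S k = if k ∈ S then 1 else 0 := by
  classical
  rw [eS, Finset.sum_apply']
  simp only [Finsupp.single_apply]
  rw [Finset.sum_ite_eq' S k (fun _ => 1)]

lemma eS_support (S : Finset (Fin n)) : (eS S).support = S := by
  ext k
  rw [Finsupp.mem_support_iff, eS_apply]
  split_ifs with h <;> simp [h]

lemma nf_eS (S : Finset (Fin n)) : nf A (eS S) = Finsupp.single S 1 := by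
  rw [nf_of_squarefree, eS_support]
  rintro ⟨i, hi⟩
  rw [eS_apply] at hi
  split_ifs at hi <;> omega

lemma monomial_eS (S : Finset (Fin n)) :
    (monomial (eS S) 1 : MvPolynomial (Fin n) ℤ) = ∏ i ∈ S, X i := by
  rw [← prod_X_pow_eq_monomial, eS_support]
  exact Finset.prod_congr rfl fun x hx => by rw [eS_apply, if_pos hx, pow_one]

lemma li_global : LinearIndependent ℤ
    (fun S : Finset (Fin n) => ∏ i ∈ S, bx A i) := by
  rw [linearIndependent_iff]
  intro c hc
  have hprod : ∀ S : Finset (Fin n), (∏ i ∈ S, bx A i)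
      = Ideal.Quotient.mk (bottIdeal A) (∏ i ∈ S, X i) := fun S => (map_prod _ _ _).symm
  set F : Finset (Fin n) → MvPolynomial (Fin n) ℤ := fun S => ∏ i ∈ S, X i with hF
  have hmk : Ideal.Quotient.mk (bottIdeal A) (Finsupp.linearCombination ℤ F c) = 0 := by
    have := Finsupp.apply_linearCombination ℤ
      (Ideal.Quotient.mkₐ ℤ (bottIdeal A)).toLinearMap F c
    simp only [AlgHom.toLinearMap_apply, Ideal.Quotient.mkₐ_eq_mk] at this
    rw [this]
    have hfun : (⇑(Ideal.Quotient.mkₐ ℤ (bottIdeal A)).toLinearMap ∘ F)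
        = fun S : Finset (Fin n) => ∏ i ∈ S, bx A i := by
      funext S
      simp only [Function.comp_apply, AlgHom.toLinearMap_apply, Ideal.Quotient.mkₐ_eq_mk, hprod]
      rfl
    rw [hfun, hc]
  have hmem : Finsupp.linearCombination ℤ F c ∈ bottIdeal A :=
    (Ideal.Quotient.eq_zero_iff_mem).mp hmk
  have h0 : phi A (Finsupp.linearCombination ℤ F c) = 0 := phi_ideal A hmem
  rw [Finsupp.linearCombination_apply, map_finsuppSum] at h0
  have : (c.sum fun S a => phi A (a • F S)) = c.sum fun S a => Finsupp.single S a := by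
    refine Finsupp.sum_congr fun S _ => ?_
    have : F S = monomial (eS S) 1 := (monomial_eS S).symm
    rw [map_smul, this, phi_monomial, one_smul, nf_eS, Finsupp.smul_single, smul_eq_mul, mul_one]
  rw [this, Finsupp.sum_single] at h0
  exact h0

lemma sub_single_two_add (e : Fin n →₀ ℕ) (i : Fin n) (hi : 2 ≤ e i) :
    e - Finsupp.single i 2 + Finsupp.single i 2 = e := by
  ext k
  simp only [Finsupp.add_apply, Finsupp.tsub_apply, Finsupp.single_apply]
  split_ifs <;> subst_vars <;> omega

lemma deg_add (e f : Fin n →₀ ℕ) : (∑ i : Fin n, (e + f) i) = (∑ i : Fin n, e i) + ∑ i : Fin n, f i := by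
  simp [Finsupp.add_apply, Finset.sum_add_distrib]

lemma deg_single (i : Fin n) (m : ℕ) : (∑ k : Fin n, (Finsupp.single i m : Fin n →₀ ℕ) k) = m := by
  simp [Finsupp.single_apply, Finset.sum_ite_eq' Finset.univ i (fun _ => m)]

lemma mem_span_monomial : ∀ (e : Fin n →₀ ℕ) (k : ℕ), (∑ i : Fin n, e i) = k →
    Ideal.Quotient.mk (bottIdeal A) (monomial e 1) ∈
      Submodule.span ℤ (Set.range fun S : {S : Finset (Fin n) // S.card = k} =>
        ∏ i ∈ S.1, bx A i) := by
  suffices H : ∀ (m : ℕ) (e : Fin n →₀ ℕ) (k : ℕ), mu e = m → (∑ i : Fin n, e i) = k →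
      Ideal.Quotient.mk (bottIdeal A) (monomial e 1) ∈
        Submodule.span ℤ (Set.range fun S : {S : Finset (Fin n) // S.card = k} =>
          ∏ i ∈ S.1, bx A i) from fun e k he => H (mu e) e k rfl he
  intro m
  induction m using Nat.strong_induction_on with
  | _ m IH =>
    rintro e k rfl he
    by_cases h : ∃ i, 2 ≤ e i
    · obtain ⟨i, hi⟩ := h
      set f := e - Finsupp.single i 2 with hf
      have hef : e = f + Finsupp.single i 2 := (sub_single_two_add e i hi).symm
      have hgen : Ideal.Quotient.mk (bottIdeal A)
          (monomial f 1 * (X i ^ 2 - bottAlpha A i * X i)) = 0 := by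
        rw [Ideal.Quotient.eq_zero_iff_mem]
        exact Ideal.mul_mem_left _ _ (Ideal.subset_span ⟨i, rfl⟩)
      have heq : Ideal.Quotient.mk (bottIdeal A) (monomial e 1)
          = Ideal.Quotient.mk (bottIdeal A) (monomial f 1 * (bottAlpha A i * X i)) := by
        rw [hef, ← expand_sq, ← sub_eq_zero, ← map_sub, ← mul_sub]
        exact hgen
      rw [heq, expand_alpha, map_sum]
      refine Submodule.sum_mem _ fun j hj => ?_
      simp only [Finset.mem_filter] at hj
      rw [map_zsmul]
      refine Submodule.smul_mem _ _ ?_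
      refine IH _ ?_ _ k rfl ?_
      · rw [hef, mu_add, mu_add, mu_add, mu_single, mu_single, mu_single]
        have : (2:ℕ) ^ (j:ℕ) < 2 ^ (i:ℕ) := Nat.pow_lt_pow_right one_lt_two hj.2
        omega
      · rw [deg_add, deg_add, deg_single, deg_single, ← he, hef, deg_add, deg_single]
    · push_neg at h
      have h1 : ∀ j, e j ≤ 1 := fun j => by have := h j; omega
      have hsq : e = eS e.support := by
        ext k
        rw [eS_apply]
        split_ifs with hk
        · have h2 := Finsupp.mem_support_iff.mp hk
          have := h1 k
          omega
        · exact Finsupp.notMem_support_iff.mp hk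
      have hcard : e.support.card = k :=
        calc e.support.card = ∑ _i ∈ e.support, 1 := Finset.card_eq_sum_ones _
          _ = ∑ i ∈ e.support, e i := Finset.sum_congr rfl fun x hx => by
              have h2 := Finsupp.mem_support_iff.mp hx
              have := h1 x
              omega
          _ = ∑ i : Fin n, e i := Finset.sum_subset (Finset.subset_univ _)
              (fun x _ hx => Finsupp.notMem_support_iff.mp hx)
          _ = k := he
      refine Submodule.subset_span ⟨⟨e.support, hcard⟩, ?_⟩
      show (∏ i ∈ e.support, bx A i) = _
      rw [show (∏ i ∈ e.support, bx A i)
          = Ideal.Quotient.mk (bottIdeal A) (∏ i ∈ e.support, X i) from (map_prod _ _ _).symm,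
        ← monomial_eS, ← hsq]

lemma span_all_top :
    ⊤ ≤ Submodule.span ℤ (Set.range fun S : Finset (Fin n) => ∏ i ∈ S, bx A i) := by
  rintro x -
  obtain ⟨p, rfl⟩ := Ideal.Quotient.mk_surjective x
  rw [MvPolynomial.as_sum p, map_sum]
  refine Submodule.sum_mem _ fun v hv => ?_
  have h1 : (monomial v (coeff v p) : MvPolynomial (Fin n) ℤ)
      = coeff v p • monomial v 1 := by
    rw [MvPolynomial.smul_monomial, smul_eq_mul, mul_one]
  rw [h1, map_zsmul]
  refine Submodule.smul_mem _ _ ?_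
  refine Submodule.span_mono ?_ (mem_span_monomial A v (∑ i : Fin n, v i) rfl)
  rintro _ ⟨S, rfl⟩
  exact ⟨S.1, rfl⟩

end BottAux

/-- The square-free monomials `x_{i₁} ⋯ x_{i_k}` with
`i₁ < ⋯ < i_k` form a `ℤ`-basis of the degree-`2k` graded component of
`R = ℤ[x_1,…,x_n]/⟨x_i² − α_i x_i⟩` (each `x_i` being of cohomological degree 2,
i.e. polynomial degree `k` corresponds to cohomological degree `2k`):
they are linearly independent and span the image of the homogeneous
polynomials of degree `k`.  In particular `R` is a free `ℤ`-module with
basis indexed by subsets of `{1,…,n}`, of rank `2^n`. -/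
theorem stmt4 {n : ℕ} (A : Matrix (Fin n) (Fin n) ℤ)
    (hlt : ∀ i j : Fin n, i < j → A i j = 0)
    (hdiag : ∀ i : Fin n, A i i = -1) :
    (∀ k : ℕ,
      LinearIndependent ℤ
        (fun S : {S : Finset (Fin n) // S.card = k} => ∏ i ∈ S.1, bx A i) ∧
      Submodule.span ℤ
          (Set.range fun S : {S : Finset (Fin n) // S.card = k} =>
            ∏ i ∈ S.1, bx A i)
        = Submodule.map (Ideal.Quotient.mkₐ ℤ (bottIdeal A)).toLinearMap
            (MvPolynomial.homogeneousSubmodule (Fin n) ℤ k)) ∧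
    (∃ b : Module.Basis (Finset (Fin n)) ℤ (MvPolynomial (Fin n) ℤ ⧸ bottIdeal A),
      ∀ S : Finset (Fin n), b S = ∏ i ∈ S, bx A i) ∧
    Module.rank ℤ (MvPolynomial (Fin n) ℤ ⧸ bottIdeal A) = 2 ^ n := by
  classical
  refine ⟨fun k => ⟨?_, ?_⟩, ⟨Module.Basis.mk (BottAux.li_global A) (BottAux.span_all_top A),
    fun S => Module.Basis.mk_apply _ _ _⟩, ?_⟩
  · exact (BottAux.li_global A).comp Subtype.val Subtype.val_injective
  · apply le_antisymm
    · rw [Submodule.span_le]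
      rintro _ ⟨S, rfl⟩
      refine ⟨∏ i ∈ S.1, X i, ?_, ?_⟩
      · rw [SetLike.mem_coe, mem_homogeneousSubmodule]
        have h := MvPolynomial.IsHomogeneous.prod S.1
          (fun i => (X i : MvPolynomial (Fin n) ℤ)) (fun _ => 1)
          (fun i _ => isHomogeneous_X ℤ i)
        rwa [Finset.sum_const, smul_eq_mul, mul_one, S.2] at h
      · simp only [AlgHom.toLinearMap_apply, Ideal.Quotient.mkₐ_eq_mk, map_prod]
        rfl
    · rintro x ⟨p, hp, rfl⟩
      rw [AlgHom.toLinearMap_apply, Ideal.Quotient.mkₐ_eq_mk, MvPolynomial.as_sum p, map_sum]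
      refine Submodule.sum_mem _ fun v hv => ?_
      have hdeg : (∑ i : Fin n, v i) = k := by
        have h2 := (mem_homogeneousSubmodule _ _).mp hp (Finsupp.mem_support_iff.mp hv)
        have h3 : (Finsupp.weight (1 : Fin n → ℕ)) v = ∑ i : Fin n, v i := by
          rw [Finsupp.weight_apply, Finsupp.sum_fintype _ _ (fun i => by simp)]
          simp
        rw [← h3]
        exact h2
      rw [show (monomial v (coeff v p) : MvPolynomial (Fin n) ℤ)
          = coeff v p • monomial v 1 by rw [MvPolynomial.smul_monomial, smul_eq_mul, mul_one],
        map_zsmul]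
      exact Submodule.smul_mem _ _ (BottAux.mem_span_monomial A v k hdeg)
  · rw [rank_eq_card_basis (Module.Basis.mk (BottAux.li_global A) (BottAux.span_all_top A))]
    rw [Fintype.card_finset, Fintype.card_fin]
    push_cast
    rfl
end

section
/- Let π be a permutation of {1,...,n} and A a Bott matrix such that A_π := P_π A P_π^{-1} is again a Bott matrix (lower triangular with -1 diagonal), where P_π is the permutation matrix of π. Then the map φ_π defined on generators by φ_π(x_i) = x'_{π(i)} induces a graded ring isomorphism from ℤ[x_1,...,x_n]/⟨x_i² − α_i^A x_i⟩ to ℤ[x'_1,...,x'_n]/⟨x'_i² − α_i^{A_π} x'_i⟩, satisfying φ_π(2x_i − α_i^A) = 2x'_{π(i)} − α_{π(i)}^{A_π} for all i. -/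
open MvPolynomial

/-- The class `α_i` in `R`. -/
noncomputable def ba {n : ℕ} (A : Matrix (Fin n) (Fin n) ℤ) (i : Fin n) :
    MvPolynomial (Fin n) ℤ ⧸ bottIdeal A :=
  Ideal.Quotient.mk _ (bottAlpha A i)


lemma bottAlpha_ne {n : ℕ} (A : Matrix (Fin n) (Fin n) ℤ)
    (hlt : ∀ i j : Fin n, i < j → A i j = 0) (i : Fin n) :
    (∑ j ∈ Finset.univ.filter (fun j => j < i), C (A i j) * X j : MvPolynomial (Fin n) ℤ)
      = ∑ j ∈ Finset.univ.filter (fun j => j ≠ i), C (A i j) * X j := by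
  apply Finset.sum_subset
  · intro j hj
    simp only [Finset.mem_filter, Finset.mem_univ, true_and] at *
    exact ne_of_lt hj
  · intro j _ hj
    simp only [Finset.mem_filter, Finset.mem_univ, true_and, not_lt] at hj
    have hji : i < j := by
      rcases lt_or_eq_of_le hj with h | h
      · exact h
      · simp [Finset.mem_filter, h] at *
    rw [hlt i j hji]; simp

lemma rename_bottAlpha {n : ℕ} (A Aπ : Matrix (Fin n) (Fin n) ℤ)
    (π : Equiv.Perm (Fin n))
    (hlt : ∀ i j : Fin n, i < j → A i j = 0)
    (hAπ : ∀ i j : Fin n, Aπ i j = A (π.symm i) (π.symm j))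
    (hlt' : ∀ i j : Fin n, i < j → Aπ i j = 0) (i : Fin n) :
    rename π (bottAlpha A i) = bottAlpha Aπ (π i) := by
  rw [bottAlpha, bottAlpha, bottAlpha_ne A hlt, bottAlpha_ne Aπ hlt', map_sum]
  simp only [map_mul, rename_C, rename_X]
  refine Finset.sum_equiv π ?_ ?_
  · intro j; simp [Equiv.eq_symm_apply, eq_comm]
  · intro j _
    rw [hAπ]; simp

set_option maxHeartbeats 2000000 in
/-- Let `π` be a permutation of `{1,…,n}` and `A` a Bott matrix
such that `A_π := P_π A P_π⁻¹`, i.e. the matrix with entries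
`(A_π)_{i,j} = a_{π⁻¹(i),π⁻¹(j)}`, is again a Bott matrix (lower triangular with
`-1` diagonal).  Then `x_i ↦ x'_{π(i)}` induces a (graded) ring isomorphism
`φ_π : R ≃ R'` with `φ_π(2x_i − α_i^A) = 2x'_{π(i)} − α^{A_π}_{π(i)}` for all `i`. -/
theorem stmt6 {n : ℕ} (A Aπ : Matrix (Fin n) (Fin n) ℤ)
    (π : Equiv.Perm (Fin n))
    (hlt : ∀ i j : Fin n, i < j → A i j = 0)
    (hdiag : ∀ i : Fin n, A i i = -1)
    (hAπ : ∀ i j : Fin n, Aπ i j = A (π.symm i) (π.symm j))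
    (hlt' : ∀ i j : Fin n, i < j → Aπ i j = 0)
    (hdiag' : ∀ i : Fin n, Aπ i i = -1) :
    ∃ φ : (MvPolynomial (Fin n) ℤ ⧸ bottIdeal A) ≃+*
          (MvPolynomial (Fin n) ℤ ⧸ bottIdeal Aπ),
      (∀ i : Fin n, φ (bx A i) = bx Aπ (π i)) ∧
      (∀ i : Fin n,
        φ (2 * bx A i - ba A i) = 2 * bx Aπ (π i) - ba Aπ (π i)) := by
  set e : MvPolynomial (Fin n) ℤ ≃+* MvPolynomial (Fin n) ℤ :=
    (renameEquiv ℤ π).toRingEquiv with hedef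
  have he : ∀ p, e p = rename π p := fun p => rfl
  have hcomp : (⇑(e : MvPolynomial (Fin n) ℤ →+* MvPolynomial (Fin n) ℤ) ∘ fun i : Fin n =>
      X i ^ 2 - bottAlpha A i * X i)
      = (fun i : Fin n => X i ^ 2 - bottAlpha Aπ i * X i) ∘ π := by
    funext i
    show e (X i ^ 2 - bottAlpha A i * X i) = _
    rw [he, map_sub, map_mul, map_pow, rename_X,
      rename_bottAlpha A Aπ π hlt hAπ hlt' i]
    rfl
  have hmap : bottIdeal Aπ = (bottIdeal A).map (e : MvPolynomial (Fin n) ℤ →+* _) := by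
    rw [bottIdeal, bottIdeal, Ideal.map_span, ← Set.range_comp, hcomp,
      Set.range_comp, Equiv.range_eq_univ, Set.image_univ]
  have key : ∀ (B : Matrix (Fin n) (Fin n) ℤ) (i : Fin n),
      2 * bx B i - ba B i
        = Ideal.Quotient.mk (bottIdeal B) (2 * X i - bottAlpha B i) := by
    intro B i
    rw [bx, ba, map_sub, map_mul, map_ofNat]
  refine ⟨Ideal.quotientEquiv _ _ e hmap, ?_, ?_⟩
  · intro i
    rw [bx, Ideal.quotientEquiv_mk, bx]
    congr 1
    rw [he, rename_X]
  · intro i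
    rw [key, key, Ideal.quotientEquiv_mk]
    congr 1
    rw [he, map_sub, map_mul, rename_X, rename_bottAlpha A Aπ π hlt hAπ hlt' i,
      map_ofNat]
end

section
/- Let A be a Bott matrix and for each subset J ⊆ {1,...,n} define the cone σ_J in ℝ^n generated by {e_j : j ∈ J} ∪ {v_j : j ∉ J}, where v_j is the j-th column of A. Then for any I ⊆ {1,...,n}, the linear map given by L_I^{-1} sends each cone σ_J of the fan Σ_A bijectively onto a maximal cone of the fan Σ_{A_I}; in particular, L_I^{-1} maps σ_I onto the first quadrant Cone(e_1,...,e_n). -/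
/-- The `j`-th ray generator of the maximal cone `σ_J` of the fan `Σ_A`, viewed
in `ℝⁿ`: the standard basis vector `e_j` if `j ∈ J` and the `j`-th column `v_j`
of `A` if `j ∉ J`. -/
def rayGen {n : ℕ} (A : Matrix (Fin n) (Fin n) ℤ) (J : Finset (Fin n))
    (j : Fin n) : Fin n → ℝ :=
  if j ∈ J then (fun i => if i = j then 1 else 0) else fun i => (A i j : ℝ)

/-- The maximal cone `σ_J = Cone({e_j : j ∈ J} ∪ {v_j : j ∉ J}) ⊆ ℝⁿ` of the
fan `Σ_A`, described as the set of nonnegative linear combinations of its ray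
generators. -/
def coneOf {n : ℕ} (A : Matrix (Fin n) (Fin n) ℤ) (J : Finset (Fin n)) :
    Set (Fin n → ℝ) :=
  {x | ∃ t : Fin n → ℝ, (∀ j, 0 ≤ t j) ∧ x = ∑ j : Fin n, t j • rayGen A J j}

lemma Lmat_det_isUnit {n : ℕ} (A : Matrix (Fin n) (Fin n) ℤ)
    (hlt : ∀ i j : Fin n, i < j → A i j = 0)
    (hdiag : ∀ i : Fin n, A i i = -1)
    (I : Finset (Fin n)) : IsUnit (Lmat A I).det := by
  have htri : (Lmat A I).BlockTriangular OrderDual.toDual := by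
    intro i j h
    have h' : i < j := h
    by_cases hj : j ∈ I <;> simp [Lmat, hj, h'.ne, hlt i j h']
  rw [Matrix.det_of_lowerTriangular _ htri]
  refine Finset.prod_induction _ IsUnit (fun a b ha hb => ha.mul hb) isUnit_one ?_
  intro i _
  by_cases hi : i ∈ I <;> simp [Lmat, hi, hdiag i, Int.isUnit_iff]

/-- `rayGen` is the cast of the columns of `Lmat`. -/
lemma rayGen_eq {n : ℕ} (A : Matrix (Fin n) (Fin n) ℤ) (J : Finset (Fin n))
    (j : Fin n) : rayGen A J j = fun i => ((Lmat A J i j : ℤ) : ℝ) := by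
  by_cases hj : j ∈ J
  · ext i
    simp only [rayGen, Lmat, hj, if_true, Matrix.of_apply]
    split <;> simp
  · ext i
    simp [rayGen, Lmat, hj]

lemma mulVec_sum_smul {n : ℕ} (M : Matrix (Fin n) (Fin n) ℝ) (t : Fin n → ℝ)
    (g : Fin n → Fin n → ℝ) :
    M.mulVec (∑ j, t j • g j) = ∑ j, t j • M.mulVec (g j) := by
  simp only [← Matrix.mulVecLin_apply, map_sum, map_smul]


/-- For a Bott matrix `A` and any `I ⊆ {1,…,n}`, the linear
map given by `L_I⁻¹` is bijective and sends each maximal cone `σ_J` of `Σ_A`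
onto a maximal cone of `Σ_{A_I}`, where `A_I = L_I⁻¹ L_{Iᶜ}`; in particular it
sends `σ_I` onto the first quadrant `Cone(e_1,…,e_n)`. -/
theorem stmt11 {n : ℕ} (A : Matrix (Fin n) (Fin n) ℤ)
    (hlt : ∀ i j : Fin n, i < j → A i j = 0)
    (hdiag : ∀ i : Fin n, A i i = -1)
    (I : Finset (Fin n)) :
    Function.Bijective
      (fun x : Fin n → ℝ => (((Lmat A I)⁻¹).map (Int.cast : ℤ → ℝ)).mulVec x) ∧
    (∀ J : Finset (Fin n), ∃ J' : Finset (Fin n),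
      (fun x : Fin n → ℝ => (((Lmat A I)⁻¹).map (Int.cast : ℤ → ℝ)).mulVec x) ''
          coneOf A J
        = coneOf ((Lmat A I)⁻¹ * Lmat A Iᶜ) J') ∧
    (fun x : Fin n → ℝ => (((Lmat A I)⁻¹).map (Int.cast : ℤ → ℝ)).mulVec x) ''
        coneOf A I
      = coneOf ((Lmat A I)⁻¹ * Lmat A Iᶜ) Finset.univ := by
  set L := Lmat A I with hL
  set B := L⁻¹ with hB
  have hdet := Lmat_det_isUnit A hlt hdiag I
  have hBL : B * L = 1 := Matrix.nonsing_inv_mul L hdet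
  have hLB : L * B = 1 := Matrix.mul_nonsing_inv L hdet
  set c : ℤ →+* ℝ := Int.castRingHom ℝ with hc
  have hmapBL : B.map c * L.map c = 1 := by
    rw [← Matrix.map_mul, hBL, Matrix.map_one c c.map_zero c.map_one]
  have hmapLB : L.map c * B.map c = 1 := by
    rw [← Matrix.map_mul, hLB, Matrix.map_one c c.map_zero c.map_one]
  have hcast : B.map (Int.cast : ℤ → ℝ) = B.map c := rfl
  -- Bijectivity
  have hbij : Function.Bijective
      (fun x : Fin n → ℝ => (B.map (Int.cast : ℤ → ℝ)).mulVec x) := by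
    rw [hcast]
    refine Function.bijective_iff_has_inverse.mpr
      ⟨fun y => (L.map c).mulVec y, fun x => ?_, fun y => ?_⟩
    · simp [Matrix.mulVec_mulVec, hmapLB]
    · simp [Matrix.mulVec_mulVec, hmapBL]
  -- The key cone image statement
  have key : ∀ J : Finset (Fin n),
      (fun x : Fin n → ℝ => (B.map (Int.cast : ℤ → ℝ)).mulVec x) '' coneOf A J
        = coneOf (B * Lmat A Iᶜ) (Finset.univ.filter fun j => (j ∈ J ↔ j ∈ I)) := by
    intro J
    set J' := Finset.univ.filter fun j => (j ∈ J ↔ j ∈ I) with hJ'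
    -- pointwise action on ray generators
    have hray : ∀ j, (B.map (Int.cast : ℤ → ℝ)).mulVec (rayGen A J j)
        = rayGen (B * Lmat A Iᶜ) J' j := by
      intro j
      have hcol : ∀ i, (B * Lmat A J) i j = Lmat (B * Lmat A Iᶜ) J' i j := by
        intro i
        by_cases hj : j ∈ J'
        · -- j ∈ J': columns of Lmat A J and L agree at j
          have hcols : ∀ k, Lmat A J k j = L k j := by
            intro k
            have hiff : (j ∈ J) ↔ (j ∈ I) := by simpa [hJ'] using hj
            by_cases hjJ : j ∈ J
            · simp [hL, Lmat, hjJ, hiff.mp hjJ]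
            · have hjI : j ∉ I := fun h => hjJ (hiff.mpr h)
              simp [hL, Lmat, hjJ, hjI]
          have h1 : (B * Lmat A J) i j = (B * L) i j := by
            simp_rw [Matrix.mul_apply, hcols]
          rw [h1, hBL]
          simp [Lmat, hj, Matrix.one_apply]
        · -- j ∉ J': columns of Lmat A J and Lmat A Iᶜ agree at j
          have hcols : ∀ k, Lmat A J k j = Lmat A Iᶜ k j := by
            intro k
            have hne : ¬ ((j ∈ J) ↔ (j ∈ I)) := by simpa [hJ'] using hj
            by_cases hjJ : j ∈ J
            · have hjI : j ∉ I := fun h => hne ⟨fun _ => h, fun _ => hjJ⟩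
              simp [Lmat, hjJ, hjI]
            · have hjI : j ∈ I := by
                by_contra hjI
                exact hne ⟨fun h => absurd h hjJ, fun h => absurd h hjI⟩
              simp [Lmat, hjJ, hjI]
          have h1 : (B * Lmat A J) i j = (B * Lmat A Iᶜ) i j := by
            simp_rw [Matrix.mul_apply, hcols]
          rw [h1]
          simp [Lmat, hj]
      ext i
      rw [rayGen_eq A J j, rayGen_eq (B * Lmat A Iᶜ) J' j]
      have : (B.map (Int.cast : ℤ → ℝ)).mulVec (fun k => ((Lmat A J k j : ℤ) : ℝ)) i
          = (((B * Lmat A J) i j : ℤ) : ℝ) := by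
        simp [Matrix.mulVec, dotProduct, Matrix.mul_apply, Matrix.map_apply]
      rw [this, hcol i]
    ext y
    constructor
    · rintro ⟨x, ⟨t, ht, rfl⟩, rfl⟩
      exact ⟨t, ht, by dsimp only; rw [mulVec_sum_smul]; simp_rw [hray]⟩
    · rintro ⟨t, ht, rfl⟩
      refine ⟨∑ j, t j • rayGen A J j, ⟨t, ht, rfl⟩, ?_⟩
      dsimp only; rw [mulVec_sum_smul]; simp_rw [hray]
  refine ⟨hbij, fun J => ⟨_, key J⟩, ?_⟩
  have := key I
  simpa using this
end

section
/- Consider the Hirzebruch surface cohomology rings H = ℤ[x_1,x_2]/⟨x_1², x_2²⟩ (for H_0) and H' = ℤ[x'_1,x'_2]/⟨(x'_1)², x'_2(x'_2 − 2x'_1)⟩ (for H_2). The map φ' defined by φ'(x_1) = x'_1, φ'(x_2) = x'_2 − x'_1 is a graded ring isomorphism H → H', and it sends 2x_1 + 2x_2 to 2x'_2, i.e., it preserves the first Chern classes c_1(H_0) = 2x_1 + 2x_2 and c_1(H_2) = 2x'_2. -/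
open MvPolynomial

/-- The integral cohomology ring `H = ℤ[x₁,x₂]/⟨x₁², x₂²⟩` of the Hirzebruch
surface `H₀ = ℂP¹ × ℂP¹`. -/
noncomputable abbrev HirzebruchZero : Type :=
  MvPolynomial (Fin 2) ℤ ⧸
    Ideal.span ({X 0 ^ 2, X 1 ^ 2} : Set (MvPolynomial (Fin 2) ℤ))

/-- The integral cohomology ring `H' = ℤ[x'₁,x'₂]/⟨x'₁², x'₂(x'₂ − 2x'₁)⟩` of the
Hirzebruch surface `H₂ = P(O ⊕ O(2))`. -/
noncomputable abbrev HirzebruchTwo : Type :=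
  MvPolynomial (Fin 2) ℤ ⧸
    Ideal.span ({X 0 ^ 2, X 1 * (X 1 - 2 * X 0)} : Set (MvPolynomial (Fin 2) ℤ))

noncomputable abbrev I0 : Ideal (MvPolynomial (Fin 2) ℤ) :=
  Ideal.span ({X 0 ^ 2, X 1 ^ 2} : Set (MvPolynomial (Fin 2) ℤ))

noncomputable abbrev I2 : Ideal (MvPolynomial (Fin 2) ℤ) :=
  Ideal.span ({X 0 ^ 2, X 1 * (X 1 - 2 * X 0)} : Set (MvPolynomial (Fin 2) ℤ))

noncomputable def fwdPoly : MvPolynomial (Fin 2) ℤ →+* MvPolynomial (Fin 2) ℤ :=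
  (aeval ![X 0, X 1 - X 0] : MvPolynomial (Fin 2) ℤ →ₐ[ℤ] _).toRingHom

noncomputable def bwdPoly : MvPolynomial (Fin 2) ℤ →+* MvPolynomial (Fin 2) ℤ :=
  (aeval ![X 0, X 1 + X 0] : MvPolynomial (Fin 2) ℤ →ₐ[ℤ] _).toRingHom

lemma fwdPoly_X0 : fwdPoly (X 0) = X 0 := by simp [fwdPoly]
lemma fwdPoly_X1 : fwdPoly (X 1) = X 1 - X 0 := by simp [fwdPoly]
lemma bwdPoly_X0 : bwdPoly (X 0) = X 0 := by simp [bwdPoly]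
lemma bwdPoly_X1 : bwdPoly (X 1) = X 1 + X 0 := by simp [bwdPoly]

lemma fwd_ker : I0 ≤ Ideal.comap fwdPoly I2 := by
  rw [I0, Ideal.span_le]
  rintro p (rfl | rfl) <;> simp only [SetLike.mem_coe, Ideal.mem_comap, map_pow, map_mul,
    fwdPoly_X0, fwdPoly_X1, I2, Ideal.mem_span_pair]
  · exact ⟨1, 0, by ring⟩
  · exact ⟨1, 1, by ring⟩

lemma bwd_ker : I2 ≤ Ideal.comap bwdPoly I0 := by
  rw [I2, Ideal.span_le]
  rintro p (rfl | rfl) <;> simp only [SetLike.mem_coe, Ideal.mem_comap, map_pow, map_mul, map_sub,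
    map_ofNat, bwdPoly_X0, bwdPoly_X1, I0, Ideal.mem_span_pair]
  · exact ⟨1, 0, by ring⟩
  · exact ⟨-1, 1, by ring⟩

noncomputable def fwd : HirzebruchZero →+* HirzebruchTwo :=
  Ideal.Quotient.lift I0 ((Ideal.Quotient.mk I2).comp fwdPoly) (fun p hp =>
    Ideal.Quotient.eq_zero_iff_mem.mpr (fwd_ker hp))

noncomputable def bwd : HirzebruchTwo →+* HirzebruchZero :=
  Ideal.Quotient.lift I2 ((Ideal.Quotient.mk I0).comp bwdPoly) (fun p hp =>
    Ideal.Quotient.eq_zero_iff_mem.mpr (bwd_ker hp))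

lemma fwd_mk (p) : fwd (Ideal.Quotient.mk I0 p) = Ideal.Quotient.mk I2 (fwdPoly p) := rfl
lemma bwd_mk (p) : bwd (Ideal.Quotient.mk I2 p) = Ideal.Quotient.mk I0 (bwdPoly p) := rfl

set_option synthInstance.maxHeartbeats 1000000 in
lemma bwd_fwd : bwd.comp fwd = RingHom.id _ := by
  refine Ideal.Quotient.ringHom_ext (MvPolynomial.ringHom_ext (fun a => ?_) (fun i => ?_)) <;>
    simp only [RingHom.comp_apply, RingHom.id_apply]
  · simp [fwd_mk, bwd_mk, fwdPoly, bwdPoly]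
  · fin_cases i
    · simp [fwd_mk, fwdPoly_X0, bwd_mk, bwdPoly_X0]
    · simp only [Fin.mk_one, fwd_mk, fwdPoly_X1, bwd_mk]
      congr 1
      rw [map_sub, bwdPoly_X0, bwdPoly_X1]
      ring

set_option synthInstance.maxHeartbeats 1000000 in
lemma fwd_bwd : fwd.comp bwd = RingHom.id _ := by
  refine Ideal.Quotient.ringHom_ext (MvPolynomial.ringHom_ext (fun a => ?_) (fun i => ?_)) <;>
    simp only [RingHom.comp_apply, RingHom.id_apply]
  · simp [fwd_mk, bwd_mk, fwdPoly, bwdPoly]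
  · fin_cases i
    · simp [bwd_mk, bwdPoly_X0, fwd_mk, fwdPoly_X0]
    · simp only [Fin.mk_one, bwd_mk, bwdPoly_X1, fwd_mk]
      congr 1
      rw [map_add, fwdPoly_X0, fwdPoly_X1]
      ring

lemma key1 : fwd (Ideal.Quotient.mk I0 (X 0)) = Ideal.Quotient.mk I2 (X 0) := by
  rw [fwd_mk, fwdPoly_X0]

lemma key2 : fwd (Ideal.Quotient.mk I0 (X 1))
    = Ideal.Quotient.mk I2 (X 1) - Ideal.Quotient.mk I2 (X 0) := by
  rw [fwd_mk, fwdPoly_X1, map_sub]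

set_option synthInstance.maxHeartbeats 1000000 in
lemma key3 : fwd (2 * Ideal.Quotient.mk I0 (X 0) + 2 * Ideal.Quotient.mk I0 (X 1))
    = 2 * Ideal.Quotient.mk I2 (X 1) := by
  rw [map_add, map_mul, map_mul, key1, key2, map_ofNat]
  ring

/-- The map `φ'` with `φ'(x₁) = x'₁` and `φ'(x₂) = x'₂ − x'₁`
is a (graded) ring isomorphism `H → H'` sending `2x₁ + 2x₂` to `2x'₂`, i.e. it
preserves the first Chern classes `c₁(H₀) = 2x₁ + 2x₂` and `c₁(H₂) = 2x'₂`. -/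
theorem stmt12 :
    ∃ φ : HirzebruchZero ≃+* HirzebruchTwo,
      φ (Ideal.Quotient.mk _ (X 0)) = Ideal.Quotient.mk _ (X 0) ∧
      φ (Ideal.Quotient.mk _ (X 1))
        = Ideal.Quotient.mk _ (X 1) - Ideal.Quotient.mk _ (X 0) ∧
      φ (2 * Ideal.Quotient.mk _ (X 0) + 2 * Ideal.Quotient.mk _ (X 1))
        = 2 * Ideal.Quotient.mk _ (X 1) := by
  exact ⟨RingEquiv.ofRingHom fwd bwd fwd_bwd bwd_fwd, key1, key2, key3⟩
end

section
/- Consider the rings H = ℤ[x_1,x_2]/⟨x_1², x_2²⟩ and H' = ℤ[x'_1,x'_2]/⟨(x'_1)², x'_2(x'_2 − 2x'_1)⟩. The map φ defined by φ(x_1) = x'_1, φ(x_2) = x'_1 − x'_2 is a graded ring isomorphism H → H' that does NOT send 2x_1 + 2x_2 to 2x'_2 (it sends it to 4x'_1 − 2x'_2 ≠ 2x'_2). -/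
open MvPolynomial

set_option synthInstance.maxHeartbeats 1000000
set_option maxHeartbeats 1600000

local notation "I0" => Ideal.span ({X 0 ^ 2, X 1 ^ 2} : Set (MvPolynomial (Fin 2) ℤ))

local notation "I2" => Ideal.span ({X 0 ^ 2, X 1 * (X 1 - 2 * X 0)} : Set (MvPolynomial (Fin 2) ℤ))

noncomputable def fAux : MvPolynomial (Fin 2) ℤ →+* HirzebruchTwo :=
  (aeval ![Ideal.Quotient.mk I2 (X 0),
    Ideal.Quotient.mk I2 (X 0) - Ideal.Quotient.mk I2 (X 1)]).toRingHom

noncomputable def gAux : MvPolynomial (Fin 2) ℤ →+* HirzebruchZero :=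
  (aeval ![Ideal.Quotient.mk I0 (X 0),
    Ideal.Quotient.mk I0 (X 0) - Ideal.Quotient.mk I0 (X 1)]).toRingHom

lemma fAux_X0 : fAux (X 0) = Ideal.Quotient.mk I2 (X 0) := by
  show (aeval ![Ideal.Quotient.mk I2 (X 0),
    Ideal.Quotient.mk I2 (X 0) - Ideal.Quotient.mk I2 (X 1)]) (X 0) = _
  rw [aeval_X]; rfl

lemma fAux_X1 : fAux (X 1)
    = Ideal.Quotient.mk I2 (X 0) - Ideal.Quotient.mk I2 (X 1) := by
  show (aeval ![Ideal.Quotient.mk I2 (X 0),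
    Ideal.Quotient.mk I2 (X 0) - Ideal.Quotient.mk I2 (X 1)]) (X 1) = _
  rw [aeval_X]; rfl

lemma gAux_X0 : gAux (X 0) = Ideal.Quotient.mk I0 (X 0) := by
  show (aeval ![Ideal.Quotient.mk I0 (X 0),
    Ideal.Quotient.mk I0 (X 0) - Ideal.Quotient.mk I0 (X 1)]) (X 0) = _
  rw [aeval_X]; rfl

lemma gAux_X1 : gAux (X 1)
    = Ideal.Quotient.mk I0 (X 0) - Ideal.Quotient.mk I0 (X 1) := by
  show (aeval ![Ideal.Quotient.mk I0 (X 0),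
    Ideal.Quotient.mk I0 (X 0) - Ideal.Quotient.mk I0 (X 1)]) (X 1) = _
  rw [aeval_X]; rfl

lemma fAux_ker : ∀ a ∈ I0, fAux a = 0 := by
  suffices h : I0 ≤ RingHom.ker fAux from fun a ha => h ha
  rw [Ideal.span_le]
  rintro p (rfl | rfl) <;> rw [SetLike.mem_coe, RingHom.mem_ker]
  · rw [map_pow, fAux_X0, ← map_pow, Ideal.Quotient.eq_zero_iff_mem]
    exact Ideal.subset_span (Or.inl rfl)
  · rw [map_pow, fAux_X1, ← RingHom.map_sub, ← map_pow,
      Ideal.Quotient.eq_zero_iff_mem]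
    have h : (X 0 - X 1 : MvPolynomial (Fin 2) ℤ) ^ 2
        = X 1 * (X 1 - 2 * X 0) + X 0 ^ 2 := by ring
    rw [h]
    exact add_mem (Ideal.subset_span (Or.inr rfl)) (Ideal.subset_span (Or.inl rfl))

lemma gAux_ker : ∀ a ∈ I2, gAux a = 0 := by
  suffices h : I2 ≤ RingHom.ker gAux from fun a ha => h ha
  rw [Ideal.span_le]
  rintro p (rfl | rfl) <;> rw [SetLike.mem_coe, RingHom.mem_ker]
  · rw [map_pow, gAux_X0, ← map_pow, Ideal.Quotient.eq_zero_iff_mem]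
    exact Ideal.subset_span (Or.inl rfl)
  · rw [map_mul, RingHom.map_sub, map_mul, gAux_X0, gAux_X1, map_ofNat]
    have h : ((Ideal.Quotient.mk I0 (X 0) - Ideal.Quotient.mk I0 (X 1)) *
        ((Ideal.Quotient.mk I0 (X 0) - Ideal.Quotient.mk I0 (X 1)) -
          (2 : HirzebruchZero) * Ideal.Quotient.mk I0 (X 0)))
        = Ideal.Quotient.mk I0 (X 1 ^ 2 - X 0 ^ 2) := by
      rw [map_sub, map_pow, map_pow]; ring
    rw [h, Ideal.Quotient.eq_zero_iff_mem]
    exact sub_mem (Ideal.subset_span (Or.inr rfl)) (Ideal.subset_span (Or.inl rfl))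

noncomputable def fHom : HirzebruchZero →+* HirzebruchTwo :=
  Ideal.Quotient.lift I0 fAux fAux_ker

noncomputable def gHom : HirzebruchTwo →+* HirzebruchZero :=
  Ideal.Quotient.lift I2 gAux gAux_ker

lemma fHom_X0 : fHom (Ideal.Quotient.mk I0 (X 0)) = Ideal.Quotient.mk I2 (X 0) := by
  rw [fHom, Ideal.Quotient.lift_mk, fAux_X0]

lemma fHom_X1 : fHom (Ideal.Quotient.mk I0 (X 1))
    = Ideal.Quotient.mk I2 (X 0) - Ideal.Quotient.mk I2 (X 1) := by
  rw [fHom, Ideal.Quotient.lift_mk, fAux_X1]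

lemma gHom_X0 : gHom (Ideal.Quotient.mk I2 (X 0)) = Ideal.Quotient.mk I0 (X 0) := by
  rw [gHom, Ideal.Quotient.lift_mk, gAux_X0]

lemma gHom_X1 : gHom (Ideal.Quotient.mk I2 (X 1))
    = Ideal.Quotient.mk I0 (X 0) - Ideal.Quotient.mk I0 (X 1) := by
  rw [gHom, Ideal.Quotient.lift_mk, gAux_X1]

/-- Evaluation at `X 0 ↦ ε`, `X 1 ↦ 2ε` in the dual numbers. -/
noncomputable def eDual : MvPolynomial (Fin 2) ℤ →+* DualNumber ℤ :=
  (aeval ![(DualNumber.eps : DualNumber ℤ), 2 * DualNumber.eps]).toRingHom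

lemma eDual_X0 : eDual (X 0) = (DualNumber.eps : DualNumber ℤ) := by
  show (aeval ![(DualNumber.eps : DualNumber ℤ), 2 * DualNumber.eps]) (X 0) = _
  rw [aeval_X]; rfl

lemma eDual_X1 : eDual (X 1) = 2 * (DualNumber.eps : DualNumber ℤ) := by
  show (aeval ![(DualNumber.eps : DualNumber ℤ), 2 * DualNumber.eps]) (X 1) = _
  rw [aeval_X]; rfl

lemma eDual_ker : I2 ≤ RingHom.ker eDual := by
  rw [Ideal.span_le]
  rintro p (rfl | rfl) <;> rw [SetLike.mem_coe, RingHom.mem_ker]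
  · rw [map_pow, eDual_X0, sq, DualNumber.eps_mul_eps]
  · rw [map_mul, RingHom.map_sub, map_mul, eDual_X0, eDual_X1, map_ofNat]
    have h : ((2 : DualNumber ℤ) * DualNumber.eps) *
        ((2 : DualNumber ℤ) * DualNumber.eps - (2 : DualNumber ℤ) * DualNumber.eps)
        = 0 := by ring
    rw [h]

/-- The map `φ` with `φ(x₁) = x'₁` and `φ(x₂) = x'₁ − x'₂` is
a (graded) ring isomorphism `H → H'` which does NOT send `2x₁ + 2x₂` to `2x'₂`:
it sends it to `4x'₁ − 2x'₂`, and `4x'₁ − 2x'₂ ≠ 2x'₂` in `H'`. -/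
theorem stmt13 :
    ∃ φ : HirzebruchZero ≃+* HirzebruchTwo,
      φ (Ideal.Quotient.mk _ (X 0)) = Ideal.Quotient.mk _ (X 0) ∧
      φ (Ideal.Quotient.mk _ (X 1))
        = Ideal.Quotient.mk _ (X 0) - Ideal.Quotient.mk _ (X 1) ∧
      φ (2 * Ideal.Quotient.mk _ (X 0) + 2 * Ideal.Quotient.mk _ (X 1))
        = 4 * Ideal.Quotient.mk _ (X 0) - 2 * Ideal.Quotient.mk _ (X 1) ∧
      (4 * (Ideal.Quotient.mk _ (X 0) : HirzebruchTwo)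
          - 2 * Ideal.Quotient.mk _ (X 1))
        ≠ 2 * Ideal.Quotient.mk _ (X 1) := by
  have hgf : gHom.comp fHom = RingHom.id _ := by
    apply Ideal.Quotient.ringHom_ext
    apply MvPolynomial.ringHom_ext
    · intro r; simp
    · intro i
      fin_cases i
      · show gHom (fHom (Ideal.Quotient.mk I0 (X 0))) = Ideal.Quotient.mk I0 (X 0)
        rw [fHom_X0, gHom_X0]
      · show gHom (fHom (Ideal.Quotient.mk I0 (X 1))) = Ideal.Quotient.mk I0 (X 1)
        rw [fHom_X1, RingHom.map_sub, gHom_X0, gHom_X1]; ring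
  have hfg : fHom.comp gHom = RingHom.id _ := by
    apply Ideal.Quotient.ringHom_ext
    apply MvPolynomial.ringHom_ext
    · intro r; simp
    · intro i
      fin_cases i
      · show fHom (gHom (Ideal.Quotient.mk I2 (X 0))) = Ideal.Quotient.mk I2 (X 0)
        rw [gHom_X0, fHom_X0]
      · show fHom (gHom (Ideal.Quotient.mk I2 (X 1))) = Ideal.Quotient.mk I2 (X 1)
        rw [gHom_X1, RingHom.map_sub, fHom_X0, fHom_X1]; ring
  refine ⟨RingEquiv.ofRingHom fHom gHom hfg hgf, fHom_X0, fHom_X1, ?_, ?_⟩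
  · show fHom (2 * Ideal.Quotient.mk I0 (X 0) + 2 * Ideal.Quotient.mk I0 (X 1))
        = 4 * Ideal.Quotient.mk I2 (X 0) - 2 * Ideal.Quotient.mk I2 (X 1)
    rw [map_add, map_mul, map_mul, fHom_X0, fHom_X1, map_ofNat]
    ring
  · intro h
    have h4 : (4 : HirzebruchTwo) * Ideal.Quotient.mk I2 (X 0)
        - 4 * Ideal.Quotient.mk I2 (X 1) = 0 := by
      linear_combination h
    have hmem : (4 * X 0 - 4 * X 1 : MvPolynomial (Fin 2) ℤ) ∈ I2 := by
      rw [← Ideal.Quotient.eq_zero_iff_mem, map_sub, map_mul, map_mul, map_ofNat]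
      exact h4
    have he : eDual (4 * X 0 - 4 * X 1) = 0 := eDual_ker hmem
    have he2 : eDual (4 * X 0 - 4 * X 1) = (-4 : DualNumber ℤ) * DualNumber.eps := by
      rw [RingHom.map_sub, map_mul, map_mul, map_ofNat, eDual_X0, eDual_X1]
      ring
    rw [he2] at he
    have hsnd := congrArg TrivSqZeroExt.snd he
    rw [TrivSqZeroExt.snd_mul] at hsnd
    simp at hsnd
    have h4' : (4 : DualNumber ℤ).fst = (4 : ℤ) := rfl
    rw [h4'] at hsnd
    norm_num at hsnd
end

section
/- Let R' be the cohomology ring ℤ[x'_1,...,x'_n]/⟨x'_i² − α'_i x'_i⟩ of a Bott manifold and let c_j, a_{k,j} be integers for j < k such that (Σ_{j<k} c_j x'_j)(Σ_{j<k}(c_j − a_{k,j})x'_j) = 0 in R', and such that for each j, either c_j = 0 or c_j = a_{k,j} with a_{k,j} ∈ {−1,1}. Then for every ℓ < k with c_ℓ = 0 and some j < k with c_j ≠ 0, one has a_{k,ℓ} = 0; i.e., c_j ≠ 0 for some j implies a_{k,ℓ} = 0 whenever c_ℓ = 0. -/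
open MvPolynomial

lemma deg_single {n : ℕ} (j : Fin n) (m : ℕ) : Finsupp.degree (Finsupp.single j m) = m := by
  exact Finsupp.degree_single j m

lemma deg_add {n : ℕ} (f g : Fin n →₀ ℕ) : (f + g).degree = f.degree + g.degree := by
  simp [Finsupp.degree_eq_weight_one, map_add]

lemma coeff_mul_homog {n : ℕ} {g p : MvPolynomial (Fin n) ℤ} (hg : g.IsHomogeneous 2)
    (m : Fin n →₀ ℕ) (hm : Finsupp.degree m = 2) :
    MvPolynomial.coeff m (p * g) = MvPolynomial.coeff 0 p * MvPolynomial.coeff m g := by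
  rw [MvPolynomial.coeff_mul]
  rw [Finset.sum_eq_single ((0 : Fin n →₀ ℕ), m)]
  · intro b hb hbne
    by_cases h : MvPolynomial.coeff b.2 g = 0
    · simp [h]
    · exfalso
      have h2 : Finsupp.degree b.2 = 2 := by
        have := hg h; rw [Finsupp.degree_eq_weight_one]; exact this
      have hb' : b.1 + b.2 = m := Finset.HasAntidiagonal.mem_antidiagonal.mp hb
      have hadd : Finsupp.degree b.1 + Finsupp.degree b.2 = 2 := by
        rw [Finsupp.degree_eq_weight_one] at *
        rw [← map_add, hb', hm]
      have hb1 : b.1 = 0 := by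
        rw [← Finsupp.degree_eq_zero_iff]; omega
      apply hbne
      rw [hb1, zero_add] at hb'
      exact Prod.ext hb1 hb'
  · intro h
    exfalso; exact h (Finset.HasAntidiagonal.mem_antidiagonal.mpr (zero_add m))


lemma gen_homog {n : ℕ} (A : Matrix (Fin n) (Fin n) ℤ) (i : Fin n) :
    (X i ^ 2 - bottAlpha A i * X i : MvPolynomial (Fin n) ℤ).IsHomogeneous 2 := by
  apply MvPolynomial.IsHomogeneous.sub
  · simpa using (isHomogeneous_X ℤ i).pow 2
  · have h1 : (bottAlpha A i).IsHomogeneous 1 := by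
      apply MvPolynomial.IsHomogeneous.sum
      intro j hj
      simpa using (isHomogeneous_C (Fin n) (A i j)).mul (isHomogeneous_X ℤ j)
    simpa using h1.mul (isHomogeneous_X ℤ i)

lemma coeff_gen_sq {n : ℕ} (A : Matrix (Fin n) (Fin n) ℤ) (i r : Fin n) :
    MvPolynomial.coeff (Finsupp.single i 2) (X r ^ 2 - bottAlpha A r * X r : MvPolynomial (Fin n) ℤ)
      = if r = i then 1 else 0 := by
  rw [MvPolynomial.coeff_sub]
  have h1 : MvPolynomial.coeff (Finsupp.single i 2) (X r ^ 2 : MvPolynomial (Fin n) ℤ)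
      = if r = i then 1 else 0 := by
    rw [MvPolynomial.X_pow_eq_monomial, MvPolynomial.coeff_monomial]
    by_cases h : r = i <;> simp [h, Finsupp.single_eq_single_iff]
  have h2 : MvPolynomial.coeff (Finsupp.single i 2) (bottAlpha A r * X r : MvPolynomial (Fin n) ℤ)
      = 0 := by
    rw [bottAlpha, Finset.sum_mul, MvPolynomial.coeff_sum]
    apply Finset.sum_eq_zero
    intro j hj
    simp only [Finset.mem_filter] at hj
    have : (C (A r j) * X j * X r : MvPolynomial (Fin n) ℤ)
        = MvPolynomial.monomial (Finsupp.single j 1 + Finsupp.single r 1) (A r j) := by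
      rw [MvPolynomial.X, MvPolynomial.X, mul_assoc, MvPolynomial.monomial_mul, MvPolynomial.C_mul_monomial, mul_one]
      ring_nf
    rw [this, MvPolynomial.coeff_monomial, if_neg, ]
    intro heq
    have h2 : Finsupp.single i 2 = Finsupp.single i 1 + Finsupp.single i 1 := by
      rw [← Finsupp.single_add]
    rw [h2, Finsupp.single_add_single_eq_single_add_single one_ne_zero one_ne_zero] at heq
    rcases heq with ⟨hj1, hr1⟩ | ⟨_, hj1, hr1⟩ | ⟨habs, _⟩
    · exact absurd (hj1 ▸ hr1 ▸ hj.2) (lt_irrefl _)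
    · exact absurd (hj1 ▸ hr1 ▸ hj.2) (lt_irrefl _)
    · simp at habs
  rw [h1, h2, sub_zero]

lemma coeff_lin {n : ℕ} (u v : Fin n → ℤ) (m : Fin n →₀ ℕ) :
    MvPolynomial.coeff m ((∑ i, C (u i) * X i) * (∑ i, C (v i) * X i) : MvPolynomial (Fin n) ℤ) =
    ∑ p, ∑ q, (if (Finsupp.single p 1 + Finsupp.single q 1) = m then u p * v q else 0) := by
  rw [Finset.sum_mul_sum]
  rw [MvPolynomial.coeff_sum]
  apply Finset.sum_congr rfl
  intro p _
  rw [MvPolynomial.coeff_sum]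
  apply Finset.sum_congr rfl
  intro q _
  have : (C (u p) * X p * (C (v q) * X q) : MvPolynomial (Fin n) ℤ)
      = MvPolynomial.monomial (Finsupp.single p 1 + Finsupp.single q 1) (u p * v q) := by
    rw [MvPolynomial.X, MvPolynomial.X]
    rw [show (C (u p) * (monomial (Finsupp.single p 1)) 1 * (C (v q) * (monomial (Finsupp.single q 1)) 1) : MvPolynomial (Fin n) ℤ)
        = C (u p) * C (v q) * ((monomial (Finsupp.single p 1)) 1 * (monomial (Finsupp.single q 1)) 1) by ring]
    rw [MvPolynomial.monomial_mul, ← MvPolynomial.C_mul, MvPolynomial.C_mul_monomial]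
    ring_nf
  rw [this, MvPolynomial.coeff_monomial]

lemma coeff_lin_sq {n : ℕ} (u v : Fin n → ℤ) (i : Fin n) :
    MvPolynomial.coeff (Finsupp.single i 2)
      ((∑ i, C (u i) * X i) * (∑ i, C (v i) * X i) : MvPolynomial (Fin n) ℤ) = u i * v i := by
  rw [coeff_lin]
  have hcond : ∀ p q : Fin n,
      ((Finsupp.single p 1 + Finsupp.single q 1 = Finsupp.single i 2)) = (p = i ∧ q = i) := by
    intro p q
    apply propext
    rw [show (Finsupp.single i 2 : Fin n →₀ ℕ) = Finsupp.single i 1 + Finsupp.single i 1 by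
      rw [← Finsupp.single_add]]
    rw [Finsupp.single_add_single_eq_single_add_single one_ne_zero one_ne_zero]
    constructor
    · rintro (h | ⟨_, h1, h2⟩ | ⟨habs, _⟩)
      · exact h
      · exact ⟨h1, h2⟩
      · simp at habs
    · intro h; exact Or.inl h
  simp only [hcond, ite_and]
  simp [Finset.sum_ite_eq']

lemma coeff_lin_cross {n : ℕ} (u v : Fin n → ℤ) (j l : Fin n) (hjl : j ≠ l) :
    MvPolynomial.coeff (Finsupp.single j 1 + Finsupp.single l 1)
      ((∑ i, C (u i) * X i) * (∑ i, C (v i) * X i) : MvPolynomial (Fin n) ℤ)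
      = u j * v l + u l * v j := by
  rw [coeff_lin]
  have hcond : ∀ p q : Fin n,
      ((Finsupp.single p 1 + Finsupp.single q 1 = Finsupp.single j 1 + Finsupp.single l 1)) =
      ((p = j ∧ q = l) ∨ (p = l ∧ q = j)) := by
    intro p q
    apply propext
    rw [Finsupp.single_add_single_eq_single_add_single one_ne_zero one_ne_zero]
    constructor
    · rintro (h | ⟨_, h1, h2⟩ | ⟨habs, _⟩)
      · exact Or.inl h
      · exact Or.inr ⟨h1, h2⟩
      · simp at habs
    · rintro (h | ⟨h1, h2⟩)
      · exact Or.inl h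
      · exact Or.inr (Or.inl ⟨rfl, h1, h2⟩)
  simp only [hcond]
  have hsplit : ∀ p q : Fin n,
      (if (p = j ∧ q = l) ∨ (p = l ∧ q = j) then u p * v q else 0)
      = (if p = j ∧ q = l then u p * v q else 0) + (if p = l ∧ q = j then u p * v q else 0) := by
    intro p q
    by_cases hA : p = j ∧ q = l <;> by_cases hB : p = l ∧ q = j
    · exact absurd (hA.1 ▸ hB.1) hjl
    all_goals simp [hA, hB, hjl, Ne.symm hjl]
  simp only [hsplit, Finset.sum_add_distrib]
  simp [ite_and, Finset.sum_ite_eq']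


/-- In the cohomology ring `R'` of a Bott manifold, suppose
integers `c_j, a_{k,j}` (for `j < k`) satisfy
`(Σ_{j<k} c_j x'_j)(Σ_{j<k}(c_j − a_{k,j})x'_j) = 0`, that for each `j < k`
either `c_j = 0` or `c_j = a_{k,j} ∈ {−1,1}`, and that `c_j ≠ 0` for some
`j < k`.  Then `a_{k,ℓ} = 0` for every `ℓ < k` with `c_ℓ = 0`. -/
theorem stmt15 {n : ℕ} (A' : Matrix (Fin n) (Fin n) ℤ)
    (hlt' : ∀ i j : Fin n, i < j → A' i j = 0)
    (hdiag' : ∀ i : Fin n, A' i i = -1)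
    (k : Fin n) (c a : Fin n → ℤ)
    (hprod :
      (∑ j ∈ Finset.univ.filter (fun j => j < k),
          (c j : MvPolynomial (Fin n) ℤ ⧸ bottIdeal A') * bx A' j) *
      (∑ j ∈ Finset.univ.filter (fun j => j < k),
          ((c j - a j : ℤ) : MvPolynomial (Fin n) ℤ ⧸ bottIdeal A') * bx A' j)
        = 0)
    (hca : ∀ j : Fin n, j < k → c j = 0 ∨ (c j = a j ∧ (a j = 1 ∨ a j = -1)))
    (hex : ∃ j : Fin n, j < k ∧ c j ≠ 0) :
    ∀ l : Fin n, l < k → c l = 0 → a l = 0 := by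
  classical
  intro l hlk hcl
  obtain ⟨j₀, hj₀k, hj₀⟩ := hex
  set b : Fin n → ℤ := fun j => if j < k then c j else 0 with hb
  set d : Fin n → ℤ := fun j => if j < k then c j - a j else 0 with hd
  set P : MvPolynomial (Fin n) ℤ := (∑ i, C (b i) * X i) * (∑ i, C (d i) * X i) with hP
  -- step 1 : P is in the ideal
  have key : ∀ u : Fin n → ℤ,
      (∑ j ∈ Finset.univ.filter (fun j => j < k),
        ((u j : ℤ) : MvPolynomial (Fin n) ℤ ⧸ bottIdeal A') * bx A' j)
      = Ideal.Quotient.mk (bottIdeal A') (∑ i, C (if i < k then u i else 0) * X i) := by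
    intro u
    have h1 : (∑ i, C (if i < k then u i else 0) * X i : MvPolynomial (Fin n) ℤ)
        = ∑ j ∈ Finset.univ.filter (fun j => j < k), C (u j) * X j := by
      rw [Finset.sum_filter]
      apply Finset.sum_congr rfl
      intro i _
      split <;> simp
    rw [h1, map_sum]
    apply Finset.sum_congr rfl
    intro j hj
    rw [map_mul]
    have h2 : ((u j : ℤ) : MvPolynomial (Fin n) ℤ ⧸ bottIdeal A')
        = Ideal.Quotient.mk (bottIdeal A') (C (u j)) :=
      (eq_intCast ((Ideal.Quotient.mk (bottIdeal A')).comp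
        (C : ℤ →+* MvPolynomial (Fin n) ℤ)) (u j)).symm
    rw [h2]
    rfl
  have hmem : P ∈ bottIdeal A' := by
    rw [← Ideal.Quotient.eq_zero_iff_mem]
    have e1 := key c
    have e2 := key (fun j => c j - a j)
    simp only [hP, hb, hd, map_mul]
    rw [← e1, ← e2]
    exact hprod
  have hmem' : P ∈ Submodule.span (MvPolynomial (Fin n) ℤ)
      (Set.range fun i : Fin n => X i ^ 2 - bottAlpha A' i * X i) := hmem
  rw [Submodule.mem_span_range_iff_exists_fun] at hmem'
  obtain ⟨q, hq⟩ := hmem'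
  have hbd : ∀ i : Fin n, b i * d i = 0 := by
    intro i
    by_cases hik : i < k
    · rcases hca i hik with h | ⟨h, _⟩
      · simp [hb, hd, hik, h]
      · simp [hb, hd, hik, h]
    · simp [hb, hd, hik]
  have hq0 : ∀ i : Fin n, MvPolynomial.coeff 0 (q i) = 0 := by
    intro i
    have h1 : MvPolynomial.coeff (Finsupp.single i 2) P = b i * d i := coeff_lin_sq b d i
    have h2 : MvPolynomial.coeff (Finsupp.single i 2)
        (∑ r, q r • (X r ^ 2 - bottAlpha A' r * X r : MvPolynomial (Fin n) ℤ))
        = MvPolynomial.coeff 0 (q i) := by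
      rw [MvPolynomial.coeff_sum]
      have h3 : ∀ r : Fin n, MvPolynomial.coeff (Finsupp.single i 2)
          (q r • (X r ^ 2 - bottAlpha A' r * X r : MvPolynomial (Fin n) ℤ))
          = MvPolynomial.coeff 0 (q r) * (if r = i then 1 else 0) := by
        intro r
        rw [smul_eq_mul, coeff_mul_homog (gen_homog A' r) _ (deg_single i 2), coeff_gen_sq]
      simp only [h3, mul_ite, mul_one, mul_zero]
      simp [Finset.sum_ite_eq']
    rw [hq] at h2
    rw [h1, hbd i] at h2
    exact h2.symm
  have hj₀l : j₀ ≠ l := fun h => hj₀ (h ▸ hcl)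
  have h1 : MvPolynomial.coeff (Finsupp.single j₀ 1 + Finsupp.single l 1) P
      = b j₀ * d l + b l * d j₀ := coeff_lin_cross b d j₀ l hj₀l
  have h2 : MvPolynomial.coeff (Finsupp.single j₀ 1 + Finsupp.single l 1)
      (∑ r, q r • (X r ^ 2 - bottAlpha A' r * X r : MvPolynomial (Fin n) ℤ)) = 0 := by
    rw [MvPolynomial.coeff_sum]
    apply Finset.sum_eq_zero
    intro r _
    rw [smul_eq_mul, coeff_mul_homog (gen_homog A' r) _ (deg_add _ _ ▸ by
      rw [deg_single, deg_single] : Finsupp.degree (Finsupp.single j₀ 1 + Finsupp.single l 1) = 2)]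
    rw [hq0 r, zero_mul]
  rw [hq] at h2
  rw [h1] at h2
  have hbl : b l = 0 := by simp [hb, hlk, hcl]
  have hdl : d l = -a l := by simp [hd, hlk, hcl]
  have hbj : b j₀ = c j₀ := by simp [hb, hj₀k]
  rw [hbl, hdl, hbj, zero_mul, add_zero] at h2
  rcases mul_eq_zero.mp h2 with h | h
  · exact absurd h hj₀
  · linarith [h]
end

section
/- Let A be an n×n lower triangular integer matrix with -1's on the diagonal such that A+E has all entries in {0,1,−1} and satisfies Suyama's Fano condition. For I ⊆ {1,...,n}, the matrix A_I = L_I^{-1} L_{I^c} also has all entries of A_I + E in {0,1,−1}. (Example of failure without the Fano condition: for A with rows (−1,0,0),(1,−1,0),(1,1,−1), the matrix A_∅ = A^{-1} has an entry −2.) -/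
/-- Suyama's condition on the `j`-th column of `B = A + E`: either the column is
zero, or it contains at most one `1` with every entry below that `1` vanishing,
and whenever there is a `−1` in row `i`, the entries below it coincide with the
entries of the `i`-th column below the diagonal. -/
def SuyamaCol {n : ℕ} (B : Matrix (Fin n) (Fin n) ℤ) (j : Fin n) : Prop :=
  (∀ i : Fin n, B i j = 0) ∨
  ((∀ i i' : Fin n, B i j = 1 → B i' j = 1 → i = i') ∧
   (∀ i i' : Fin n, B i j = 1 → i < i' → B i' j = 0) ∧
   (∀ i : Fin n, B i j = -1 → ∀ i' : Fin n, i < i' → B i' j = B i' i))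

/-- Forward substitution solving `L_I x = b`. -/
def solVec {n : ℕ} (B : Matrix (Fin n) (Fin n) ℤ) (I : Finset (Fin n)) (b : Fin n → ℤ) :
    Fin n → ℤ := fun i =>
  (if i ∈ I then 1 else -1) *
    (b i - ∑ k : Fin n, if hk : k < i ∧ k ∉ I then B i k * solVec B I b k else 0)
termination_by i => i.val
decreasing_by exact hk.1

/-- The residual after processing rows `< t`. -/
def Rres {n : ℕ} (B : Matrix (Fin n) (Fin n) ℤ) (I : Finset (Fin n)) (b : Fin n → ℤ)
    (t : ℕ) (i : Fin n) : ℤ :=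
  b i - ∑ k : Fin n, if k.val < t ∧ k ∉ I then B i k * solVec B I b k else 0

lemma solVec_eq {n : ℕ} (B : Matrix (Fin n) (Fin n) ℤ) (I : Finset (Fin n)) (b : Fin n → ℤ)
    (i : Fin n) :
    solVec B I b i = (if i ∈ I then 1 else -1) * Rres B I b i.val i := by
  have hs : (∑ k : Fin n, if hk : k < i ∧ k ∉ I then B i k * solVec B I b k else 0)
      = ∑ k : Fin n, if k.val < i.val ∧ k ∉ I then B i k * solVec B I b k else 0 :=
    Finset.sum_congr rfl fun k _ => by
      rw [dite_eq_ite]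
      exact if_congr (and_congr_left' Fin.lt_def) rfl rfl
  rw [solVec, hs, Rres]

lemma Rres_zero {n : ℕ} (B : Matrix (Fin n) (Fin n) ℤ) (I : Finset (Fin n)) (b : Fin n → ℤ)
    (i : Fin n) : Rres B I b 0 i = b i := by
  simp [Rres]

lemma Rres_succ_ge {n : ℕ} (B : Matrix (Fin n) (Fin n) ℤ) (I : Finset (Fin n)) (b : Fin n → ℤ)
    {t : ℕ} (h : n ≤ t) (i : Fin n) : Rres B I b (t + 1) i = Rres B I b t i := by
  unfold Rres
  congr 1
  refine Finset.sum_congr rfl fun k _ => ?_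
  refine if_congr ?_ rfl rfl
  have := k.isLt
  constructor <;> rintro ⟨h1, h2⟩ <;> exact ⟨by omega, h2⟩

lemma Rres_succ {n : ℕ} (B : Matrix (Fin n) (Fin n) ℤ) (I : Finset (Fin n)) (b : Fin n → ℤ)
    {t : ℕ} (h : t < n) (i : Fin n) :
    Rres B I b (t + 1) i = Rres B I b t i -
      (if (⟨t, h⟩ : Fin n) ∈ I then 0 else B i ⟨t, h⟩ * solVec B I b ⟨t, h⟩) := by
  have key : ∀ k : Fin n, (if k.val < t + 1 ∧ k ∉ I then B i k * solVec B I b k else 0)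
      = (if k.val < t ∧ k ∉ I then B i k * solVec B I b k else 0)
        + (if k = ⟨t, h⟩ then
            (if (⟨t, h⟩ : Fin n) ∈ I then 0 else B i ⟨t, h⟩ * solVec B I b ⟨t, h⟩) else 0) := by
    intro k
    by_cases hk : k = (⟨t, h⟩ : Fin n)
    · subst hk
      by_cases hkI : (⟨t, h⟩ : Fin n) ∈ I <;> simp [hkI]
    · have hv : k.val ≠ t := fun hv => hk (Fin.ext hv)
      have : (k.val < t + 1) ↔ (k.val < t) := by omega
      simp [hk, this]
  rw [Rres, Rres, Finset.sum_congr rfl fun k _ => key k, Finset.sum_add_distrib,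
    Finset.sum_ite_eq' Finset.univ]
  simp only [Finset.mem_univ, if_true]
  ring

/-- Suyama's condition for the tail (rows `≥ t`) of a vector `v`, relative to `B`. -/
def SuyVecFrom {n : ℕ} (B : Matrix (Fin n) (Fin n) ℤ) (t : ℕ) (v : Fin n → ℤ) : Prop :=
  (∀ i : Fin n, t ≤ i.val → (v i = -1 ∨ v i = 0 ∨ v i = 1)) ∧
  (∀ i i' : Fin n, t ≤ i.val → v i = 1 → i < i' → v i' = 0) ∧
  (∀ i : Fin n, t ≤ i.val → v i = -1 → ∀ i' : Fin n, i < i' → v i' = B i' i)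

lemma SuyVecFrom.mono {n : ℕ} {B : Matrix (Fin n) (Fin n) ℤ} {t t' : ℕ} {v : Fin n → ℤ}
    (h : SuyVecFrom B t v) (htt : t ≤ t') : SuyVecFrom B t' v :=
  ⟨fun i hi => h.1 i (le_trans htt hi),
   fun i i' hi => h.2.1 i i' (le_trans htt hi),
   fun i hi => h.2.2 i (le_trans htt hi)⟩

lemma suy_clauses {n : ℕ} {B : Matrix (Fin n) (Fin n) ℤ} (hsu : ∀ j, SuyamaCol B j)
    (j : Fin n) :
    (∀ i i' : Fin n, B i j = 1 → i < i' → B i' j = 0) ∧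
    (∀ i : Fin n, B i j = -1 → ∀ i' : Fin n, i < i' → B i' j = B i' i) := by
  rcases hsu j with hz | ⟨_, h2, h3⟩
  · constructor
    · intro i i' h1 _
      rw [hz i] at h1; omega
    · intro i h1
      rw [hz i] at h1; omega
  · exact ⟨h2, h3⟩

lemma invariant {n : ℕ} (B : Matrix (Fin n) (Fin n) ℤ) (I : Finset (Fin n)) (b : Fin n → ℤ)
    (hent : ∀ i j : Fin n, B i j = -1 ∨ B i j = 0 ∨ B i j = 1)
    (hsu : ∀ j, SuyamaCol B j)
    (hb : SuyVecFrom B 0 b) :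
    ∀ t, SuyVecFrom B t (Rres B I b t) := by
  intro t
  induction t with
  | zero =>
    rw [show Rres B I b 0 = b from funext (Rres_zero B I b)]
    exact hb
  | succ t ih =>
    by_cases h : t < n
    · set i0 : Fin n := ⟨t, h⟩ with hi0
      by_cases hI : i0 ∈ I
      · have he : Rres B I b (t + 1) = Rres B I b t := by
          funext i
          rw [Rres_succ B I b h i, if_pos hI]
          ring
        rw [he]
        exact ih.mono (Nat.le_succ t)
      · have hx : solVec B I b i0 = -(Rres B I b t i0) := by
          rw [solVec_eq, if_neg hI]
          ring
        have he : ∀ i, Rres B I b (t + 1) i = Rres B I b t i + Rres B I b t i0 * B i i0 := by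
          intro i
          rw [Rres_succ B I b h i, if_neg hI, hx]
          ring
        rcases ih.1 i0 (le_refl t) with hc | hc | hc
        · -- residual head is -1 : after the step the tail vanishes
          have hz : ∀ i : Fin n, t + 1 ≤ i.val → Rres B I b (t + 1) i = 0 := by
            intro i hi
            have hlt : i0 < i := by rw [Fin.lt_def]; simp only [hi0]; omega
            rw [he i, ih.2.2 i0 (le_refl t) hc i hlt, hc]
            ring
          refine ⟨fun i hi => Or.inr (Or.inl (hz i hi)), ?_, ?_⟩
          · intro i i' hi hv _
            rw [hz i hi] at hv; omega
          · intro i hi hv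
            rw [hz i hi] at hv; omega
        · -- residual head is 0 : nothing changes
          have he0 : Rres B I b (t + 1) = Rres B I b t := by
            funext i
            rw [he i, hc]
            ring
          rw [he0]
          exact ih.mono (Nat.le_succ t)
        · -- residual head is 1 : the tail becomes column i0 of B
          have hcol : ∀ i : Fin n, t + 1 ≤ i.val → Rres B I b (t + 1) i = B i i0 := by
            intro i hi
            have hlt : i0 < i := by rw [Fin.lt_def]; simp only [hi0]; omega
            rw [he i, ih.2.1 i0 i (le_refl t) hc hlt, hc]
            ring
          refine ⟨fun i hi => hcol i hi ▸ hent i i0, ?_, ?_⟩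
          · intro i i' hi hv hlt'
            have hi' : t + 1 ≤ i'.val := le_trans hi (le_of_lt (Fin.lt_def.mp hlt'))
            rw [hcol i hi] at hv
            rw [hcol i' hi']
            exact (suy_clauses hsu i0).1 i i' hv hlt'
          · intro i hi hv i' hlt'
            have hi' : t + 1 ≤ i'.val := le_trans hi (le_of_lt (Fin.lt_def.mp hlt'))
            rw [hcol i hi] at hv
            rw [hcol i' hi']
            exact (suy_clauses hsu i0).2 i hv i' hlt'
    · have he : Rres B I b (t + 1) = Rres B I b t := by
        funext i
        exact Rres_succ_ge B I b (le_of_not_gt h) i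
      rw [he]
      exact ih.mono (Nat.le_succ t)

lemma solVec_mem {n : ℕ} (B : Matrix (Fin n) (Fin n) ℤ) (I : Finset (Fin n)) (b : Fin n → ℤ)
    (hent : ∀ i j : Fin n, B i j = -1 ∨ B i j = 0 ∨ B i j = 1)
    (hsu : ∀ j, SuyamaCol B j)
    (hb : SuyVecFrom B 0 b) (i : Fin n) :
    solVec B I b i = -1 ∨ solVec B I b i = 0 ∨ solVec B I b i = 1 := by
  have hr := (invariant B I b hent hsu hb i.val).1 i (le_refl _)
  rw [solVec_eq]
  by_cases hI : i ∈ I <;> rcases hr with hv | hv | hv <;> rw [hv] <;> simp [hI]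
/-- Solving the system: `L_I * X = B` where `X` has columns `solVec B I (B · j)`. -/
lemma Lmat_mul_sol {n : ℕ} (A : Matrix (Fin n) (Fin n) ℤ) (I : Finset (Fin n))
    (hlt : ∀ i j : Fin n, i < j → A i j = 0)
    (hdiag : ∀ i : Fin n, A i i = -1)
    (B : Matrix (Fin n) (Fin n) ℤ)
    (hB : ∀ i j, B i j = A i j + if i = j then 1 else 0) :
    Lmat A I * (Matrix.of fun i j => solVec B I (fun r => B r j) i) = B := by
  ext i j
  rw [Matrix.mul_apply]
  set b : Fin n → ℤ := fun r => B r j with hb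
  have key : ∀ k : Fin n,
      Lmat A I i k * (Matrix.of fun i j => solVec B I (fun r => B r j) i) k j
      = (if k = i then (if i ∈ I then 1 else -1) * solVec B I b i else 0)
        + (if k.val < i.val ∧ k ∉ I then B i k * solVec B I b k else 0) := by
    intro k
    by_cases hk : k = i
    · subst hk
      by_cases hI : k ∈ I <;>
        simp [Lmat, hI, hdiag k, hb]
    · by_cases hkI : k ∈ I
      · have h2 : i ≠ k := fun hh => hk hh.symm
        simp [Lmat, hkI, hk, h2]
      · by_cases hklt : k.val < i.val
        · have hik : ¬ i = k := fun hh => hk hh.symm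
          have h2 : B i k = A i k := by
            rw [hB, if_neg hik]
            ring
          simp [Lmat, hkI, hk, hklt, h2, hb]
        · have h3 : i < k := by
            rw [Fin.lt_def]
            rcases Nat.lt_or_ge i.val k.val with hh | hh
            · exact hh
            · exact absurd (Fin.ext (by omega : k.val = i.val)) hk
          simp [Lmat, hkI, hk, hklt, hlt i k h3]
  rw [Finset.sum_congr rfl fun k _ => key k, Finset.sum_add_distrib,
    Finset.sum_ite_eq' Finset.univ]
  simp only [Finset.mem_univ, if_true]
  have hR : (∑ k : Fin n, if k.val < i.val ∧ k ∉ I then B i k * solVec B I b k else 0)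
      = b i - Rres B I b i.val i := by
    rw [Rres]; ring
  rw [hR, solVec_eq]
  have : b i = B i j := rfl
  by_cases hI : i ∈ I <;> simp [hI, this] <;> ring

/-- If `A` is a Bott matrix whose associated Bott manifold is
Fano, i.e. all entries of `A + E` lie in `{−1,0,1}` and every column of `A + E`
satisfies Suyama's condition, then for every `I ⊆ {1,…,n}` the matrix
`A_I = L_I⁻¹ L_{Iᶜ}` again has all entries of `A_I + E` in `{−1,0,1}`.
(Without the Fano condition this fails: the inverse of
`[[-1,0,0],[1,-1,0],[1,1,-1]]` is `[[-1,0,0],[-1,-1,0],[-2,-1,-1]]`,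
which has an entry `−2`.) -/
theorem stmt16 {n : ℕ} (A : Matrix (Fin n) (Fin n) ℤ)
    (hlt : ∀ i j : Fin n, i < j → A i j = 0)
    (hdiag : ∀ i : Fin n, A i i = -1)
    (hent : ∀ i j : Fin n, (A + 1) i j = -1 ∨ (A + 1) i j = 0 ∨ (A + 1) i j = 1)
    (hsu : ∀ j : Fin n, SuyamaCol (A + 1) j) :
    (∀ I : Finset (Fin n), ∀ i j : Fin n,
      ((Lmat A I)⁻¹ * Lmat A Iᶜ + 1) i j = -1 ∨
      ((Lmat A I)⁻¹ * Lmat A Iᶜ + 1) i j = 0 ∨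
      ((Lmat A I)⁻¹ * Lmat A Iᶜ + 1) i j = 1) ∧
    (!![(-1 : ℤ), 0, 0; 1, -1, 0; 1, 1, -1])⁻¹
      = !![(-1 : ℤ), 0, 0; -1, -1, 0; -2, -1, -1] := by
  constructor
  · intro I i j
    set B : Matrix (Fin n) (Fin n) ℤ := A + 1 with hBdef
    have hB : ∀ i j, B i j = A i j + if i = j then 1 else 0 := by
      intro i j
      simp [hBdef, Matrix.add_apply, Matrix.one_apply]
    have hent' : ∀ i j : Fin n, B i j = -1 ∨ B i j = 0 ∨ B i j = 1 := hent
    have hsu' : ∀ j, SuyamaCol B j := hsu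
    have hLtri : (Lmat A I).BlockTriangular OrderDual.toDual := by
      intro a c hac
      have h2 : a < c := hac
      have hne : ¬ a = c := ne_of_lt h2
      simp [Lmat, hne, hlt a c h2]
    have hdet : IsUnit (Lmat A I).det := by
      apply IsUnit.of_mul_eq_one ((Lmat A I).det)
      rw [Matrix.det_of_lowerTriangular _ hLtri, ← Finset.prod_mul_distrib]
      apply Finset.prod_eq_one
      intro a _
      by_cases hI : a ∈ I <;> simp [Lmat, hI, hdiag a]
    set X : Matrix (Fin n) (Fin n) ℤ :=
      Matrix.of fun i j => solVec B I (fun r => B r j) i with hX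
    have hLX : Lmat A I * X = B := Lmat_mul_sol A I hlt hdiag B hB
    have hLc : Lmat A Iᶜ = B - Lmat A I := by
      ext a c
      by_cases hc : c ∈ I <;>
        simp [Lmat, Finset.mem_compl, hc, Matrix.sub_apply, hB a c]
    have hfin : (Lmat A I)⁻¹ * Lmat A Iᶜ + 1 = X := by
      rw [hLc, Matrix.mul_sub, Matrix.nonsing_inv_mul _ hdet, sub_add_cancel,
        ← hLX, ← Matrix.mul_assoc, Matrix.nonsing_inv_mul _ hdet, Matrix.one_mul]
    rw [hfin]
    have hbcol : SuyVecFrom B 0 (fun r => B r j) := by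
      refine ⟨fun i _ => hent' i j, ?_, ?_⟩
      · intro a a' _ hv hlt'
        exact (suy_clauses hsu' j).1 a a' hv hlt'
      · intro a _ hv a' hlt'
        exact (suy_clauses hsu' j).2 a hv a' hlt'
    exact solVec_mem B I _ hent' hsu' hbcol i
  · apply Matrix.inv_eq_right_inv
    norm_num [Matrix.mul_fin_three]
    rw [Matrix.one_fin_three]
end
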